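/- arXiv:2005.07257 — 5 statements merged into one kernel-verified Lean document; each statement's English description precedes it below -/
import Mathlib

section
/- Let (s⋆, p⋆) satisfy s⋆ ≥ 0, 0 < p⋆_i < 1 for all i, and g(s⋆, p⋆) = 0, and define M(s⋆) := diag(α∘s⋆ + δ + λ + Bp⋆) − diag(1 − p⋆)·B. Then M(s⋆) is a nonsingular M-matrix: it is invertible, its inverse is entrywise nonnegative, and every complex eigenvalue of M(s⋆) has positive real part. -/
noncomputable section

open Matrix

/-- Irreducibility of a nonnegative matrix. -/
def MatIrred {N : ℕ} (B : Matrix (Fin N) (Fin N) ℝ) : Prop :=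
  ∀ i j, ∃ k : ℕ, 1 ≤ k ∧ 0 < (B ^ k) i j

/-- The map `g(s,p)` with `g_i(s,p) = (1 - p_i)(λ_i + (Bp)_i) - (α_i s_i + δ_i) p_i`. -/
def gfun {N : ℕ} (B : Matrix (Fin N) (Fin N) ℝ) (lam δ α s p : Fin N → ℝ) : Fin N → ℝ :=
  fun i => (1 - p i) * (lam i + B.mulVec p i) - (α i * s i + δ i) * p i


lemma vec_nonneg_aux {N : ℕ} (M : Matrix (Fin N) (Fin N) ℝ) (p : Fin N → ℝ)
    (hp : ∀ i, 0 < p i) (hoff : ∀ i j, i ≠ j → M i j ≤ 0)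
    (hMp : ∀ i, 0 < M.mulVec p i)
    (y : Fin N → ℝ) (hy : ∀ i, 0 ≤ M.mulVec y i) : ∀ i, 0 ≤ y i := by
  by_contra hcon
  push_neg at hcon
  obtain ⟨i0, hi0⟩ := hcon
  obtain ⟨k, -, hk⟩ := Finset.exists_min_image Finset.univ (fun i => y i / p i)
    ⟨i0, Finset.mem_univ i0⟩
  set c := y k / p k with hc
  have hcneg : c < 0 :=
    lt_of_le_of_lt (hk i0 (Finset.mem_univ i0)) (div_neg_of_neg_of_pos hi0 (hp i0))
  have hyk : y k = c * p k := by
    rw [hc, div_mul_cancel₀ _ (ne_of_gt (hp k))]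
  have hlb : ∀ j, c * p j ≤ y j := fun j =>
    (le_div_iff₀ (hp j)).mp (hk j (Finset.mem_univ j))
  have hle : M.mulVec y k ≤ c * M.mulVec p k := by
    simp only [Matrix.mulVec, dotProduct]
    rw [Finset.mul_sum]
    apply Finset.sum_le_sum
    intro j _
    by_cases hjk : j = k
    · subst hjk
      exact le_of_eq (by rw [hyk]; ring)
    · have h1 := hoff k j (fun h => hjk h.symm)
      have h2 := hlb j
      nlinarith
  have hneg : M.mulVec y k < 0 := lt_of_le_of_lt hle (mul_neg_of_neg_of_pos hcneg (hMp k))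
  exact absurd (hy k) (not_le.mpr hneg)

lemma spec_re_pos_aux {N : ℕ} (M : Matrix (Fin N) (Fin N) ℝ) (p : Fin N → ℝ)
    (hp : ∀ i, 0 < p i) (hoff : ∀ i j, i ≠ j → M i j ≤ 0)
    (hMp : ∀ i, 0 < M.mulVec p i) :
    ∀ μ ∈ spectrum ℂ (M.map Complex.ofReal), 0 < μ.re := by
  intro μ hμ
  set A := M.map Complex.ofReal with hA
  rw [spectrum.mem_iff] at hμ
  have hdet : (algebraMap ℂ (Matrix (Fin N) (Fin N) ℂ) μ - A).det = 0 := by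
    by_contra h
    exact hμ ((Matrix.isUnit_iff_isUnit_det _).mpr (isUnit_iff_ne_zero.mpr h))
  obtain ⟨v, hv0, hv⟩ := (Matrix.exists_mulVec_eq_zero_iff).mpr hdet
  have heig : A.mulVec v = μ • v := by
    rw [Matrix.sub_mulVec] at hv
    have h2 : (algebraMap ℂ (Matrix (Fin N) (Fin N) ℂ) μ).mulVec v = μ • v := by
      rw [Algebra.algebraMap_eq_smul_one, Matrix.smul_mulVec, Matrix.one_mulVec]
    rw [h2, sub_eq_zero] at hv
    exact hv.symm
  -- pick index with v i ≠ 0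
  obtain ⟨i0, hvi0⟩ : ∃ i, v i ≠ 0 := Function.ne_iff.mp hv0
  obtain ⟨k, -, hk⟩ := Finset.exists_max_image Finset.univ
    (fun i => ‖v i‖ / p i) ⟨i0, Finset.mem_univ i0⟩
  set r := ‖v k‖ / p k with hr
  have hrpos : 0 < r :=
    lt_of_lt_of_le (div_pos (norm_pos_iff.mpr hvi0) (hp i0)) (hk i0 (Finset.mem_univ i0))
  have hub : ∀ j, ‖v j‖ ≤ r * p j := fun j => by
    have := (div_le_iff₀ (hp j)).mp (hk j (Finset.mem_univ j))
    linarith [this]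
  have hvk : ‖v k‖ = r * p k := by
    rw [hr, div_mul_cancel₀ _ (ne_of_gt (hp k))]
  have hsum : (μ - (M k k : ℂ)) * v k = ∑ j ∈ Finset.univ.erase k, (M k j : ℂ) * v j := by
    have h := congrFun heig k
    simp only [Matrix.mulVec, dotProduct, hA, Matrix.map_apply, Pi.smul_apply,
      smul_eq_mul] at h
    rw [← Finset.add_sum_erase Finset.univ _ (Finset.mem_univ k)] at h
    linear_combination -h
  have hb1 : ‖μ - (M k k : ℂ)‖ * ‖v k‖
      ≤ ∑ j ∈ Finset.univ.erase k, (-(M k j)) * (r * p j) := by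
    rw [← norm_mul, hsum]
    calc ‖∑ j ∈ Finset.univ.erase k, (M k j : ℂ) * v j‖
          ≤ ∑ j ∈ Finset.univ.erase k, ‖(M k j : ℂ) * v j‖ :=
            norm_sum_le _ _
        _ ≤ ∑ j ∈ Finset.univ.erase k, (-(M k j)) * (r * p j) := by
            apply Finset.sum_le_sum
            intro j hj
            have hjk : k ≠ j := (Finset.ne_of_mem_erase hj).symm
            have hMneg := hoff k j hjk
            rw [norm_mul, Complex.norm_real, Real.norm_eq_abs, abs_of_nonpos hMneg]
            exact mul_le_mul_of_nonneg_left (hub j) (neg_nonneg.mpr hMneg)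
  have hsp : M.mulVec p k = M k k * p k + ∑ j ∈ Finset.univ.erase k, M k j * p j := by
    simp only [Matrix.mulVec, dotProduct]
    rw [← Finset.add_sum_erase Finset.univ _ (Finset.mem_univ k)]
  have hb2 : ∑ j ∈ Finset.univ.erase k, (-(M k j)) * (r * p j)
      = r * (M k k * p k - M.mulVec p k) := by
    calc ∑ j ∈ Finset.univ.erase k, (-(M k j)) * (r * p j)
        = ∑ j ∈ Finset.univ.erase k, -(r * (M k j * p j)) :=
          Finset.sum_congr rfl (fun j _ => by ring)
      _ = -(r * ∑ j ∈ Finset.univ.erase k, M k j * p j) := by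
          rw [Finset.sum_neg_distrib, ← Finset.mul_sum]
      _ = r * (M k k * p k - M.mulVec p k) := by rw [hsp]; ring
  have hkey : ‖μ - (M k k : ℂ)‖ * p k ≤ M k k * p k - M.mulVec p k := by
    have h := hb1.trans (le_of_eq hb2)
    rw [hvk] at h
    have hpk := hp k
    nlinarith [h, hrpos]
  have hre : -(‖μ - (M k k : ℂ)‖) ≤ μ.re - M k k := by
    have h1 : |(μ - (M k k : ℂ)).re| ≤ ‖μ - (M k k : ℂ)‖ :=
      Complex.abs_re_le_norm _
    have h2 : (μ - (M k k : ℂ)).re = μ.re - M k k := by simp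
    rw [h2] at h1
    linarith [abs_le.mp h1]
  nlinarith [hMp k, hp k, hkey, hre, norm_nonneg (μ - (M k k : ℂ))]

noncomputable section
open Matrix

theorem statement13' {N : ℕ} (hN : 2 ≤ N)
    (B : Matrix (Fin N) (Fin N) ℝ) (hBnn : ∀ i j, 0 ≤ B i j)
    (hBirr : ∀ i j, ∃ k : ℕ, 1 ≤ k ∧ 0 < (B ^ k) i j)
    (lam δ α : Fin N → ℝ)
    (hlam : ∀ i, 0 ≤ lam i)
    (sstar pstar : Fin N → ℝ)
    (hs : ∀ i, 0 ≤ sstar i) (hp : ∀ i, 0 < pstar i ∧ pstar i < 1)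
    (hg : (fun i => (1 - pstar i) * (lam i + B.mulVec pstar i)
      - (α i * sstar i + δ i) * pstar i) = (0 : Fin N → ℝ))
    (M : Matrix (Fin N) (Fin N) ℝ)
    (hM : M = Matrix.diagonal (fun i => α i * sstar i + δ i + lam i + B.mulVec pstar i)
      - Matrix.diagonal (fun i => 1 - pstar i) * B) :
    IsUnit M ∧ (∀ i j, 0 ≤ M⁻¹ i j) ∧
    (∀ μ ∈ spectrum ℂ (M.map Complex.ofReal), 0 < μ.re) := by
  -- row positivity of B
  have hrow : ∀ i, ∃ j, 0 < B i j := by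
    intro i
    by_contra hno
    push_neg at hno
    have hzero : ∀ j, B i j = 0 := fun j => le_antisymm (hno j) (hBnn i j)
    have hz : ∀ k : ℕ, 1 ≤ k → ∀ j, (B ^ k) i j = 0 := by
      intro k hk j
      obtain ⟨m, rfl⟩ := Nat.exists_eq_add_of_le hk
      rw [pow_add, pow_one]
      simp [Matrix.mul_apply, hzero]
    obtain ⟨k, hk1, hkpos⟩ := hBirr i i
    rw [hz k hk1 i] at hkpos
    exact lt_irrefl 0 hkpos
  have hBp : ∀ i, 0 < B.mulVec pstar i := by
    intro i
    obtain ⟨j0, hj0⟩ := hrow i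
    have : (0:ℝ) < ∑ j, B i j * pstar j := by
      apply Finset.sum_pos'
      · exact fun j _ => mul_nonneg (hBnn i j) (hp j).1.le
      · exact ⟨j0, Finset.mem_univ j0, mul_pos hj0 (hp j0).1⟩
    simpa [Matrix.mulVec, dotProduct] using this
  -- off-diagonal nonpositivity
  have hoff : ∀ i j, i ≠ j → M i j ≤ 0 := by
    intro i j hij
    rw [hM]
    simp only [Matrix.sub_apply, Matrix.diagonal_mul, Matrix.diagonal_apply_ne _ hij]
    have h1 : 0 ≤ 1 - pstar i := by linarith [(hp i).2]
    nlinarith [mul_nonneg h1 (hBnn i j)]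
  -- value of M *ᵥ pstar
  have hMp : ∀ i, 0 < M.mulVec pstar i := by
    intro i
    have hgi := congrFun hg i
    simp only [Pi.zero_apply] at hgi
    have hval : M.mulVec pstar i = lam i + pstar i * B.mulVec pstar i := by
      rw [hM, Matrix.sub_mulVec, ← Matrix.mulVec_mulVec]
      simp only [Pi.sub_apply, Matrix.mulVec_diagonal]
      have hgi' : (1 - pstar i) * (lam i + B.mulVec pstar i)
          - (α i * sstar i + δ i) * pstar i = 0 := hgi
      linear_combination -hgi'
    rw [hval]
    have := hBp i
    nlinarith [hlam i, (hp i).1]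
  -- spectrum statement
  have hspec := spec_re_pos_aux M pstar (fun i => (hp i).1) hoff hMp
  -- determinant nonzero
  have hdet : M.det ≠ 0 := by
    intro h0
    have hdetC : (M.map Complex.ofReal).det = 0 := by
      have h := RingHom.map_det Complex.ofRealHom M
      rw [RingHom.mapMatrix_apply] at h
      have he : M.map ⇑Complex.ofRealHom = M.map Complex.ofReal := rfl
      rw [he] at h
      rw [← h, h0]
      simp
    have h0mem : (0:ℂ) ∈ spectrum ℂ (M.map Complex.ofReal) := by
      rw [spectrum.mem_iff]
      intro hU
      simp only [map_zero, zero_sub] at hU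
      rw [IsUnit.neg_iff, Matrix.isUnit_iff_isUnit_det, hdetC] at hU
      exact (not_isUnit_zero : ¬IsUnit (0:ℂ)) hU
    simpa using hspec 0 h0mem
  have hU : IsUnit M := (Matrix.isUnit_iff_isUnit_det M).mpr (isUnit_iff_ne_zero.mpr hdet)
  refine ⟨hU, ?_, hspec⟩
  -- inverse nonnegativity
  have hMinv : M * M⁻¹ = 1 := Matrix.mul_nonsing_inv M (isUnit_iff_ne_zero.mpr hdet)
  intro i j
  have hy : ∀ l, 0 ≤ M.mulVec (fun m => M⁻¹ m j) l := by
    intro l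
    have : M.mulVec (fun m => M⁻¹ m j) l = (M * M⁻¹) l j := by
      simp [Matrix.mulVec, dotProduct, Matrix.mul_apply]
    rw [this, hMinv]
    by_cases hlj : l = j <;> simp [Matrix.one_apply, hlj]
  exact vec_nonneg_aux M pstar (fun i => (hp i).1) hoff hMp _ hy i

theorem statement13 {N : ℕ} (hN : 2 ≤ N)
    (B : Matrix (Fin N) (Fin N) ℝ) (hBnn : ∀ i j, 0 ≤ B i j) (hBirr : MatIrred B)
    (lam δ α : Fin N → ℝ)
    (hlam : ∀ i, 0 ≤ lam i) (hlam0 : lam ≠ 0)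
    (hδ : ∀ i, 0 < δ i) (hα : ∀ i, 0 < α i)
    (sstar pstar : Fin N → ℝ)
    (hs : ∀ i, 0 ≤ sstar i) (hp : ∀ i, 0 < pstar i ∧ pstar i < 1)
    (hg : gfun B lam δ α sstar pstar = 0)
    (M : Matrix (Fin N) (Fin N) ℝ)
    (hM : M = Matrix.diagonal (fun i => α i * sstar i + δ i + lam i + B.mulVec pstar i)
      - Matrix.diagonal (fun i => 1 - pstar i) * B) :
    IsUnit M ∧ (∀ i j, 0 ≤ M⁻¹ i j) ∧
    (∀ μ ∈ spectrum ℂ (M.map Complex.ofReal), 0 < μ.re) := by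
  exact statement13' hN B hBnn hBirr lam δ α hlam sstar pstar hs hp hg M hM
end
end
end

section
/- (i) If the spectral radius of diag(δ)^{-1}B is at most 1, then s = 0 minimizes s ↦ w(s) + cᵀp_se(s) over {s ∈ ℝ^N : s ≥ 0}, i.e., w(0) + cᵀp_se(0) ≤ w(s) + cᵀp_se(s) for all s ≥ 0. (ii) If the spectral radius of diag(δ)^{-1}B is greater than 1, then every minimizer s* ≥ 0 of s ↦ w(s) + cᵀp_se(s) satisfies ρ(s*) ≥ 1, where ρ(s) is the spectral radius of diag(α∘s + δ)^{-1}B. -/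
noncomputable section

open Matrix

/-- Spectral radius of a real matrix: the maximum modulus of its complex eigenvalues. -/
def specRad {N : ℕ} (A : Matrix (Fin N) (Fin N) ℝ) : ℝ :=
  sSup ((fun μ : ℂ => ‖μ‖) '' spectrum ℂ (A.map Complex.ofReal))

/-- `ρ(s)`: the spectral radius of `diag(α∘s + δ)⁻¹ B`. -/
def rhoS {N : ℕ} (B : Matrix (Fin N) (Fin N) ℝ) (α δ : Fin N → ℝ)
    (s : Fin N → ℝ) : ℝ :=
  specRad (Matrix.diagonal (fun i => (α i * s i + δ i)⁻¹) * B)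

open Filter
open scoped ENNReal NNReal Topology

attribute [local instance] Matrix.linftyOpNormedRing Matrix.linftyOpNormedAlgebra

namespace SpecAux

variable {N : ℕ}

lemma entry_pow_le (A C : Matrix (Fin N) (Fin N) ℝ)
    (hA : ∀ i j, 0 ≤ A i j) (hle : ∀ i j, A i j ≤ C i j) :
    ∀ k, ∀ i j, 0 ≤ (A ^ k) i j ∧ (A ^ k) i j ≤ (C ^ k) i j := by
  intro k
  induction k with
  | zero =>
    intro i j
    simp only [pow_zero, Matrix.one_apply]
    split_ifs <;> norm_num
  | succ k ih =>
    intro i j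
    rw [pow_succ, pow_succ, Matrix.mul_apply, Matrix.mul_apply]
    constructor
    · exact Finset.sum_nonneg fun l _ => mul_nonneg (ih i l).1 (hA l j)
    · exact Finset.sum_le_sum fun l _ =>
        mul_le_mul (ih i l).2 (hle l j) (hA l j) ((ih i l).1.trans (ih i l).2)

lemma nnnorm_mono (A C : Matrix (Fin N) (Fin N) ℝ)
    (hA : ∀ i j, 0 ≤ A i j) (hle : ∀ i j, A i j ≤ C i j) : ‖A‖₊ ≤ ‖C‖₊ := by
  rw [Matrix.linfty_opNNNorm_def, Matrix.linfty_opNNNorm_def]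
  refine Finset.sup_mono_fun fun i _ => Finset.sum_le_sum fun j _ => ?_
  have h : ‖A i j‖ ≤ ‖C i j‖ := by
    rw [Real.norm_eq_abs, Real.norm_eq_abs, abs_of_nonneg (hA i j),
      abs_of_nonneg ((hA i j).trans (hle i j))]
    exact hle i j
  exact_mod_cast h

lemma nnnorm_map (A : Matrix (Fin N) (Fin N) ℝ) : ‖A.map Complex.ofReal‖₊ = ‖A‖₊ := by
  simp only [Matrix.linfty_opNNNorm_def, Matrix.map_apply, Complex.nnnorm_real]

lemma map_pow' (A : Matrix (Fin N) (Fin N) ℝ) (k : ℕ) :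
    (A.map Complex.ofReal) ^ k = (A ^ k).map Complex.ofReal := by
  have h := (map_pow (Complex.ofRealHom.mapMatrix) A k).symm
  simp only [RingHom.mapMatrix_apply] at h
  exact h

lemma bddAbove_abs (C : Matrix (Fin N) (Fin N) ℝ) :
    BddAbove ((fun μ : ℂ => ‖μ‖) '' spectrum ℂ (C.map Complex.ofReal)) := by
  classical
  exact ((spectrum.isCompact (C.map Complex.ofReal)).image continuous_norm).bddAbove

lemma abs_le_specRad (C : Matrix (Fin N) (Fin N) ℝ) {μ : ℂ}
    (hμ : μ ∈ spectrum ℂ (C.map Complex.ofReal)) : ‖μ‖ ≤ specRad C :=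
  le_csSup (bddAbove_abs C) ⟨μ, hμ, rfl⟩

lemma specRad_nonneg (hN : 0 < N) (C : Matrix (Fin N) (Fin N) ℝ) : 0 ≤ specRad C := by
  haveI : Nonempty (Fin N) := Fin.pos_iff_nonempty.mp hN
  haveI : CompleteSpace (Matrix (Fin N) (Fin N) ℂ) := FiniteDimensional.complete ℂ _
  obtain ⟨μ, hμ⟩ := spectrum.nonempty (C.map Complex.ofReal)
  exact (norm_nonneg μ).trans (abs_le_specRad C hμ)

lemma spectralRadius_le_specRad (C : Matrix (Fin N) (Fin N) ℝ) :
    spectralRadius ℂ (C.map Complex.ofReal) ≤ ENNReal.ofReal (specRad C) := by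
  rw [spectralRadius]
  refine iSup₂_le fun μ hμ => ?_
  rw [← enorm_eq_nnnorm, ← ofReal_norm]
  exact ENNReal.ofReal_le_ofReal (abs_le_specRad C hμ)

lemma specRad_le_mul (hN : 0 < N) (A C : Matrix (Fin N) (Fin N) ℝ) (r : ℝ) (hr : 0 < r)
    (hA : ∀ i j, 0 ≤ A i j) (hle : ∀ i j, A i j ≤ r * C i j) :
    specRad A ≤ r * specRad C := by
  classical
  haveI : Nonempty (Fin N) := Fin.pos_iff_nonempty.mp hN
  haveI : CompleteSpace (Matrix (Fin N) (Fin N) ℂ) := FiniteDimensional.complete ℂ _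
  have h1 : ∀ k : ℕ, ‖(A.map Complex.ofReal) ^ k‖₊ ≤ ‖r‖₊ ^ k * ‖(C.map Complex.ofReal) ^ k‖₊ := by
    intro k
    rw [map_pow', map_pow', nnnorm_map, nnnorm_map]
    have hent := entry_pow_le A (r • C) hA (fun i j => by simpa using hle i j) k
    have h2 : ‖A ^ k‖₊ ≤ ‖(r • C) ^ k‖₊ :=
      nnnorm_mono _ _ (fun i j => (hent i j).1) (fun i j => (hent i j).2)
    calc ‖A ^ k‖₊ ≤ ‖(r • C) ^ k‖₊ := h2
      _ = ‖r‖₊ ^ k * ‖C ^ k‖₊ := by rw [smul_pow, nnnorm_smul, nnnorm_pow]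
  have key : ∀ μ ∈ spectrum ℂ (A.map Complex.ofReal), ‖μ‖ ≤ r * specRad C := by
    intro μ hμ
    have h2 : ∀ k : ℕ, ‖μ‖₊ ^ k ≤ ‖(A.map Complex.ofReal) ^ k‖₊ := by
      intro k
      have hmem : μ ^ k ∈ spectrum ℂ ((A.map Complex.ofReal) ^ k) :=
        spectrum.pow_image_subset (A.map Complex.ofReal) k ⟨μ, hμ, rfl⟩
      have hnorm := spectrum.norm_le_norm_of_mem hmem
      rw [← nnnorm_pow]
      exact_mod_cast hnorm
    have h3 : (‖μ‖₊ : ℝ≥0∞) ≤ (‖r‖₊ : ℝ≥0∞) * spectralRadius ℂ (C.map Complex.ofReal) := by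
      have htt : Filter.Tendsto
          (fun k : ℕ => (‖r‖₊ : ℝ≥0∞) * (‖(C.map Complex.ofReal) ^ k‖₊ : ℝ≥0∞) ^ (1 / (k : ℝ)))
          Filter.atTop (𝓝 ((‖r‖₊ : ℝ≥0∞) * spectralRadius ℂ (C.map Complex.ofReal))) :=
        ENNReal.Tendsto.const_mul
          (spectrum.pow_nnnorm_pow_one_div_tendsto_nhds_spectralRadius (C.map Complex.ofReal))
          (Or.inr ENNReal.coe_ne_top)
      refine ge_of_tendsto htt ?_
      filter_upwards [Filter.eventually_ge_atTop 1] with k hk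
      have hk0 : (k : ℝ) ≠ 0 := Nat.cast_ne_zero.mpr (by omega)
      have hineq : ((‖μ‖₊ : ℝ≥0∞)) ^ (k : ℕ) ≤
          ((‖r‖₊ : ℝ≥0∞) ^ (k : ℕ)) * (‖(C.map Complex.ofReal) ^ k‖₊ : ℝ≥0∞) := by
        exact_mod_cast (h2 k).trans (h1 k)
      have hstep := ENNReal.rpow_le_rpow hineq (by positivity : (0:ℝ) ≤ 1 / (k:ℝ))
      rwa [ENNReal.mul_rpow_of_nonneg _ _ (by positivity : (0:ℝ) ≤ 1 / (k:ℝ)),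
        ← ENNReal.rpow_natCast ((‖μ‖₊ : ℝ≥0∞)) k, ← ENNReal.rpow_natCast ((‖r‖₊ : ℝ≥0∞)) k,
        ← ENNReal.rpow_mul, ← ENNReal.rpow_mul,
        mul_one_div_cancel hk0, ENNReal.rpow_one, ENNReal.rpow_one] at hstep
    have h4 : (‖μ‖₊ : ℝ≥0∞) ≤ ENNReal.ofReal (r * specRad C) := by
      refine h3.trans ?_
      rw [← enorm_eq_nnnorm, Real.enorm_eq_ofReal hr.le, ENNReal.ofReal_mul hr.le]
      exact mul_le_mul_right (spectralRadius_le_specRad C) _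
    rw [← enorm_eq_nnnorm, ← ofReal_norm] at h4
    have hnn : 0 ≤ r * specRad C := mul_nonneg hr.le (specRad_nonneg hN C)
    exact (ENNReal.ofReal_le_ofReal_iff hnn).mp h4
  have hne : (spectrum ℂ (A.map Complex.ofReal)).Nonempty := spectrum.nonempty _
  unfold specRad
  exact csSup_le (hne.image _) (by rintro x ⟨μ, hμ, rfl⟩; exact key μ hμ)

end SpecAux

theorem statement14 {N : ℕ} (hN : 2 ≤ N)
    (B : Matrix (Fin N) (Fin N) ℝ) (hBnn : ∀ i j, 0 ≤ B i j) (hBirr : MatIrred B)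
    (δ α : Fin N → ℝ) (hδ : ∀ i, 0 < δ i) (hα : ∀ i, 0 < α i)
    (w : (Fin N → ℝ) → ℝ) (hwcont : Continuous w)
    (hwconv : ConvexOn ℝ Set.univ w)
    (hwmono : ∀ s s' : Fin N → ℝ, s ≤ s' → s ≠ s' → w s < w s')
    (c : Fin N → ℝ) (hc : ∀ i, 0 < c i)
    (pse : (Fin N → ℝ) → (Fin N → ℝ))
    (hpse_range : ∀ s : Fin N → ℝ, 0 ≤ s → ∀ i, 0 ≤ pse s i ∧ pse s i ≤ 1)
    (hpse_zero : ∀ s : Fin N → ℝ, 0 ≤ s → rhoS B α δ s ≤ 1 → pse s = 0)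
    (hpse_pos : ∀ s : Fin N → ℝ, 0 ≤ s → 1 < rhoS B α δ s →
      (∀ i, 0 < pse s i) ∧
      (∀ i, (1 - pse s i) * B.mulVec (pse s) i = (α i * s i + δ i) * pse s i)) :
    (specRad (Matrix.diagonal (fun i => (δ i)⁻¹) * B) ≤ 1 →
      ∀ s : Fin N → ℝ, 0 ≤ s →
        w 0 + ∑ i, c i * pse 0 i ≤ w s + ∑ i, c i * pse s i) ∧
    (1 < specRad (Matrix.diagonal (fun i => (δ i)⁻¹) * B) →
      ∀ sstar : Fin N → ℝ, 0 ≤ sstar →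
        (∀ s : Fin N → ℝ, 0 ≤ s →
          w sstar + ∑ i, c i * pse sstar i ≤ w s + ∑ i, c i * pse s i) →
        1 ≤ rhoS B α δ sstar) := by
  have hN0 : 0 < N := by omega
  have hzero : rhoS B α δ 0 = specRad (Matrix.diagonal (fun i => (δ i)⁻¹) * B) := by
    have h : (fun i => (α i * (0 : Fin N → ℝ) i + δ i)⁻¹) = fun i => (δ i)⁻¹ := by
      funext i; simp
    unfold rhoS
    rw [h]
  constructor
  · -- part (i)
    intro h1 s hs
    have hp0 : pse 0 = 0 := hpse_zero 0 le_rfl (by rw [hzero]; exact h1)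
    have hw : w 0 ≤ w s := by
      rcases eq_or_ne (0 : Fin N → ℝ) s with h | h
      · rw [h]
      · exact (hwmono 0 s hs h).le
    have hsum : 0 ≤ ∑ i, c i * pse s i :=
      Finset.sum_nonneg fun i _ => mul_nonneg (hc i).le (hpse_range s hs i).1
    have hz : ∑ i, c i * pse 0 i = 0 := by
      rw [hp0]; simp
    rw [hz]
    linarith
  · -- part (ii)
    intro hgt sstar hst hmin
    by_contra hlt
    push_neg at hlt
    have hsne : sstar ≠ 0 := by
      rintro rfl
      rw [hzero] at hlt
      linarith
    set ρ := rhoS B α δ sstar with hρ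
    have hρnn : 0 ≤ ρ := SpecAux.specRad_nonneg hN0 _
    set t : ℝ := (1 + ρ) / 2 with htdef
    have ht0 : 0 < t := by simp only [htdef]; linarith
    have ht1 : t < 1 := by simp only [htdef]; linarith
    have htρ : ρ < t := by simp only [htdef]; linarith
    set s : Fin N → ℝ := t • sstar with hsdef
    have hs0 : (0 : Fin N → ℝ) ≤ s := fun i => by
      simp only [hsdef, Pi.smul_apply, smul_eq_mul, Pi.zero_apply]
      exact mul_nonneg ht0.le (hst i)
    have hsle : s ≤ sstar := fun i => by
      simp only [hsdef, Pi.smul_apply, smul_eq_mul]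
      exact mul_le_of_le_one_left (hst i) ht1.le
    have hsne' : s ≠ sstar := by
      intro h
      apply hsne
      funext i
      have h1 := congrFun h i
      simp only [hsdef, Pi.smul_apply, smul_eq_mul] at h1
      have h2 : (t - 1) * sstar i = 0 := by linarith
      have h3 : t - 1 ≠ 0 := by linarith
      have := mul_eq_zero.mp h2
      simpa [h3] using this
    -- spectral radius comparison
    have hkey : rhoS B α δ s ≤ t⁻¹ * ρ := by
      unfold rhoS
      refine SpecAux.specRad_le_mul hN0 _ _ t⁻¹ (inv_pos.mpr ht0) ?_ ?_
      · intro i j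
        rw [Matrix.diagonal_mul]
        have hs0i : (0:ℝ) ≤ s i := hs0 i
        exact mul_nonneg (inv_nonneg.mpr
          (add_pos_of_nonneg_of_pos (mul_nonneg (hα i).le hs0i) (hδ i)).le) (hBnn i j)
      · intro i j
        rw [Matrix.diagonal_mul, Matrix.diagonal_mul]
        have hsi : s i = t * sstar i := by simp [hsdef]
        have hsti : (0:ℝ) ≤ sstar i := hst i
        have hs0i : (0:ℝ) ≤ s i := hs0 i
        have hpos1 : 0 < α i * sstar i + δ i :=
          add_pos_of_nonneg_of_pos (mul_nonneg (hα i).le hsti) (hδ i)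
        have hpos2 : 0 < α i * s i + δ i :=
          add_pos_of_nonneg_of_pos (mul_nonneg (hα i).le hs0i) (hδ i)
        have hcomp : t * (α i * sstar i + δ i) ≤ α i * s i + δ i := by
          rw [hsi]
          nlinarith [hδ i, ht1]
        have hinv : (α i * s i + δ i)⁻¹ ≤ (t * (α i * sstar i + δ i))⁻¹ :=
          inv_anti₀ (mul_pos ht0 hpos1) hcomp
        rw [mul_inv] at hinv
        calc (α i * s i + δ i)⁻¹ * B i j ≤ t⁻¹ * (α i * sstar i + δ i)⁻¹ * B i j :=
              mul_le_mul_of_nonneg_right hinv (hBnn i j)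
          _ = t⁻¹ * ((α i * sstar i + δ i)⁻¹ * B i j) := by ring
    have hlt1 : rhoS B α δ s < 1 := by
      refine lt_of_le_of_lt hkey ?_
      rw [← div_eq_inv_mul]
      exact (div_lt_one ht0).mpr htρ
    have hps : pse s = 0 := hpse_zero s hs0 hlt1.le
    have hpstar : pse sstar = 0 := hpse_zero sstar hst hlt.le
    have hmin' := hmin s hs0
    rw [hps, hpstar] at hmin'
    simp only [Pi.zero_apply, mul_zero, Finset.sum_const_zero, add_zero] at hmin'
    exact absurd hmin' (not_le.mpr (hwmono s sstar hsle hsne'))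
end
end

section
/- Assume the spectral radius of diag(δ)^{-1}B is greater than 1, w(0) = 0, and 0 < C* < ∞. Let ε ∈ (0, C*), C := C* − ε, and let (s_L, p_L, y_L, U_L) be a feasible point of problem (P_R3)(C) attaining f_L(C). Then: if w(s_L) < C, one has f_L* = f_L(C) ≤ f_0*; and if w(s_L) = C, one has C* − f_0* ≤ ε + ε·(f_L(0) − f_L*)/C*. -/
noncomputable section

open Matrix

/-- Feasibility for the convex relaxation (P_R3) with budget `C`. -/
def FeasPR3 {N : ℕ} (w : (Fin N → ℝ) → ℝ) (B : Matrix (Fin N) (Fin N) ℝ)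
    (α δ : Fin N → ℝ) (C : ℝ)
    (s p y : Fin N → ℝ) (U : Matrix (Fin N) (Fin N) ℝ) : Prop :=
  (∀ i, 0 ≤ s i) ∧ (∀ i, 0 ≤ y i) ∧ w s ≤ C ∧
  (∀ i, ∑ j, U i j = B.mulVec p i + α i * s i + δ i) ∧
  (∀ i, Real.exp (-(y i)) ≤ p i) ∧
  (∀ i j, Real.exp (y i) * B i j * Real.exp (-(y j)) ≤ U i j)

open Polynomial

theorem spectrum_iff_root {N : ℕ} (M : Matrix (Fin N) (Fin N) ℂ) (μ : ℂ) :
    μ ∈ spectrum ℂ M ↔ M.charpoly.IsRoot μ := by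
  rw [spectrum.mem_iff, Matrix.charpoly, IsRoot, ← Polynomial.coe_evalRingHom,
    RingHom.map_det]
  have h : (RingHom.mapMatrix (evalRingHom μ)) (charmatrix M) = algebraMap ℂ _ μ - M := by
    ext i j
    by_cases h : i = j
    · subst h
      simp [charmatrix_apply_eq, Matrix.algebraMap_matrix_apply]
    · simp [charmatrix_apply_ne _ _ _ h, Matrix.algebraMap_matrix_apply, h]
  rw [h, Matrix.isUnit_iff_isUnit_det, isUnit_iff_ne_zero, not_ne_iff]


theorem seq_growth {N : ℕ} (A : Matrix (Fin N) (Fin N) ℂ) (u : Fin N → ℂ) (i : Fin N)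
    (t : Multiset ℂ) (ht : ∀ μ ∈ t, ‖μ‖ ≤ 1) :
    ∀ (M : Matrix (Fin N) (Fin N) ℂ), A * M = M * A →
    (Polynomial.aeval A ((t.map fun μ => X - Polynomial.C μ).prod)) * M = 0 →
    ∃ Cb : ℝ, 0 ≤ Cb ∧ ∀ k : ℕ,
      ‖((M * A ^ k).mulVec u) i‖ ≤ Cb * ((k : ℝ)+1)^(Multiset.card t) := by
  induction t using Multiset.induction_on with
  | empty =>
    intro M _ hann
    simp only [Multiset.map_zero, Multiset.prod_zero, _root_.map_one, one_mul] at hann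
    refine ⟨0, le_refl 0, fun k => ?_⟩
    simp [hann]
  | cons μ t IH =>
    intro M hAM hann
    have hμ : ‖μ‖ ≤ 1 := ht μ (Multiset.mem_cons_self μ t)
    have ht' : ∀ ν ∈ t, ‖ν‖ ≤ 1 := fun ν hν => ht ν (Multiset.mem_cons_of_mem hν)
    set c : Matrix (Fin N) (Fin N) ℂ := algebraMap ℂ _ μ with hcdef
    set M₂ := (A - c) * M with hM₂
    have halg : A * c = c * A := (Algebra.commutes μ A).symm
    have hAc : A * (A - c) = (A - c) * A := by
      rw [mul_sub, sub_mul, halg]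
    have hAM₂ : A * M₂ = M₂ * A := by
      rw [hM₂, ← mul_assoc, hAc, mul_assoc, hAM, ← mul_assoc]
    have hXC : (Polynomial.aeval A) (X - Polynomial.C μ) = A - c := by
      simp [hcdef]
    have hann2 : (Polynomial.aeval A ((t.map fun ν => X - Polynomial.C ν).prod)) * M₂ = 0 := by
      have h1 : ((μ ::ₘ t).map fun ν => X - Polynomial.C ν).prod
          = ((t.map fun ν => X - Polynomial.C ν).prod) * (X - Polynomial.C μ) := by
        rw [Multiset.map_cons, Multiset.prod_cons, mul_comm]
      rw [h1, _root_.map_mul, hXC] at hann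
      rw [hM₂, ← mul_assoc]
      exact hann
    obtain ⟨Cb₂, hCb₂0, hCb₂⟩ := IH ht' M₂ hAM₂ hann2
    set n := Multiset.card t with hn
    set x : ℕ → ℂ := fun k => ((M * A ^ k).mulVec u) i with hx
    set z : ℕ → ℂ := fun k => ((M₂ * A ^ k).mulVec u) i with hz
    have hrec : ∀ k, z k = x (k+1) - μ * x k := by
      intro k
      have hmat : M₂ * A ^ k = M * A ^ (k+1) - μ • (M * A ^ k) := by
        calc M₂ * A ^ k = (A * M) * A ^ k - (c * M) * A ^ k := by
              rw [hM₂, sub_mul, sub_mul]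
          _ = M * (A * A ^ k) - μ • (M * A ^ k) := by
              rw [hAM, mul_assoc, mul_assoc, ← Algebra.smul_def]
          _ = M * A ^ (k+1) - μ • (M * A ^ k) := by rw [← pow_succ']
      rw [hz, hx]
      simp only [hmat, Matrix.sub_mulVec, Matrix.smul_mulVec, Pi.sub_apply,
        Pi.smul_apply, smul_eq_mul]
    have hstep : ∀ k, ‖x (k+1)‖ ≤ ‖x k‖ + Cb₂ * ((k:ℝ)+1)^n := by
      intro k
      have hxk : x (k+1) = μ * x k + z k := by rw [hrec k]; ring
      rw [hxk]
      have h1 : ‖μ * x k‖ ≤ ‖x k‖ := by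
        rw [norm_mul]
        exact mul_le_of_le_one_left (norm_nonneg _) hμ
      exact le_trans (norm_add_le _ _) (add_le_add h1 (hCb₂ k))
    have hsum : ∀ k, ‖x k‖
        ≤ ‖x 0‖ + Cb₂ * ∑ j ∈ Finset.range k, ((j:ℝ)+1)^n := by
      intro k
      induction k with
      | zero => simp
      | succ k ih =>
        calc ‖x (k+1)‖ ≤ ‖x k‖ + Cb₂ * ((k:ℝ)+1)^n := hstep k
          _ ≤ (‖x 0‖ + Cb₂ * ∑ j ∈ Finset.range k, ((j:ℝ)+1)^n)
              + Cb₂ * ((k:ℝ)+1)^n := by gcongr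
          _ = ‖x 0‖ + Cb₂ * ∑ j ∈ Finset.range (k+1), ((j:ℝ)+1)^n := by
              rw [Finset.sum_range_succ]; ring
    refine ⟨‖x 0‖ + Cb₂, by positivity, fun k => ?_⟩
    have hk0 : (0:ℝ) ≤ (k:ℝ) := Nat.cast_nonneg k
    have hb : ∑ j ∈ Finset.range k, ((j:ℝ)+1)^n ≤ (k:ℝ) * ((k:ℝ)+1)^n := by
      calc ∑ j ∈ Finset.range k, ((j:ℝ)+1)^n ≤ ∑ _j ∈ Finset.range k, ((k:ℝ)+1)^n := by
            apply Finset.sum_le_sum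
            intro j hj
            have hjk : (j:ℝ) ≤ (k:ℝ) := by exact_mod_cast (Finset.mem_range.mp hj).le
            have : (0:ℝ) ≤ (j:ℝ) + 1 := by positivity
            exact pow_le_pow_left₀ this (by linarith) n
        _ = (k:ℝ) * ((k:ℝ)+1)^n := by rw [Finset.sum_const, Finset.card_range]; ring
    have h1k : (1:ℝ) ≤ ((k:ℝ)+1)^(n+1) := by
      calc (1:ℝ) = 1^(n+1) := (one_pow _).symm
        _ ≤ ((k:ℝ)+1)^(n+1) := pow_le_pow_left₀ one_pos.le (by linarith) _
    have hpow : ((k:ℝ)+1)^n * ((k:ℝ)+1) = ((k:ℝ)+1)^(n+1) := (pow_succ _ _).symm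
    have hfin : ‖x k‖ ≤ (‖x 0‖ + Cb₂) * ((k:ℝ)+1)^(n+1) := by
      have e1 : ‖x 0‖ ≤ ‖x 0‖ * ((k:ℝ)+1)^(n+1) :=
        le_mul_of_one_le_right (norm_nonneg _) h1k
      have e2 : Cb₂ * ((k:ℝ) * ((k:ℝ)+1)^n) ≤ Cb₂ * ((k:ℝ)+1)^(n+1) := by
        apply mul_le_mul_of_nonneg_left _ hCb₂0
        rw [← hpow]
        have : (0:ℝ) ≤ ((k:ℝ)+1)^n := by positivity
        nlinarith
      have e3 : Cb₂ * ∑ j ∈ Finset.range k, ((j:ℝ)+1)^n ≤ Cb₂ * ((k:ℝ) * ((k:ℝ)+1)^n) :=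
        mul_le_mul_of_nonneg_left hb hCb₂0
      calc ‖x k‖ ≤ ‖x 0‖ + Cb₂ * ∑ j ∈ Finset.range k, ((j:ℝ)+1)^n :=
            hsum k
        _ ≤ ‖x 0‖ * ((k:ℝ)+1)^(n+1) + Cb₂ * ((k:ℝ)+1)^(n+1) := by
            linarith
        _ = (‖x 0‖ + Cb₂) * ((k:ℝ)+1)^(n+1) := by ring
    rw [Multiset.card_cons]
    exact hfin


theorem pow_growth {N : ℕ} (A : Matrix (Fin N) (Fin N) ℝ) (hspec : specRad A ≤ 1) :
    ∃ (n : ℕ) (Cb : ℝ), 0 ≤ Cb ∧ ∀ (i : Fin N) (k : ℕ),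
      |(A ^ k).mulVec 1 i| ≤ Cb * ((k:ℝ)+1)^n := by
  set Aℂ : Matrix (Fin N) (Fin N) ℂ := A.map Complex.ofReal with hAC
  have hmapA : Aℂ = (Complex.ofRealHom).mapMatrix A := rfl
  have hspecfin : (spectrum ℂ Aℂ).Finite := by
    have h1 : spectrum ℂ Aℂ = {μ | Aℂ.charpoly.IsRoot μ} := by
      ext μ; exact spectrum_iff_root Aℂ μ
    rw [h1]
    exact Polynomial.finite_setOf_isRoot (Aℂ.charpoly_monic.ne_zero)
  have hroot : ∀ μ ∈ Aℂ.charpoly.roots, ‖μ‖ ≤ 1 := by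
    intro μ hμ
    have hμr : Aℂ.charpoly.IsRoot μ := Polynomial.isRoot_of_mem_roots hμ
    have hμs : μ ∈ spectrum ℂ Aℂ := (spectrum_iff_root Aℂ μ).mpr hμr
    have : ‖μ‖ ≤ specRad A := by
      apply le_csSup (Set.Finite.bddAbove (hspecfin.image _))
      exact ⟨μ, hμs, rfl⟩
    linarith
  have hsplit : Aℂ.charpoly = ((Aℂ.charpoly.roots).map fun a => X - Polynomial.C a).prod :=
    (IsAlgClosed.splits _).eq_prod_roots_of_monic Aℂ.charpoly_monic
  have hann : (Polynomial.aeval Aℂ (((Aℂ.charpoly.roots).map fun a => X - Polynomial.C a).prod))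
      * (1 : Matrix (Fin N) (Fin N) ℂ) = 0 := by
    rw [← hsplit, mul_one, Matrix.aeval_self_charpoly]
  set n := Multiset.card Aℂ.charpoly.roots with hn
  have key : ∀ i : Fin N, ∃ Cb : ℝ, 0 ≤ Cb ∧ ∀ k : ℕ,
      |(A ^ k).mulVec 1 i| ≤ Cb * ((k:ℝ)+1)^n := by
    intro i
    obtain ⟨Cb, hCb0, hCb⟩ := seq_growth Aℂ (fun _ => (1:ℂ)) i Aℂ.charpoly.roots hroot 1
      (by rw [mul_one, one_mul]) hann
    refine ⟨Cb, hCb0, fun k => ?_⟩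
    have htrans : ((1 * Aℂ ^ k).mulVec (fun _ => (1:ℂ))) i
        = Complex.ofReal ((A ^ k).mulVec 1 i) := by
      rw [one_mul, hmapA, ← _root_.map_pow, RingHom.mapMatrix_apply]
      simp only [Matrix.mulVec, dotProduct, Matrix.map_apply]
      push_cast
      simp
    have := hCb k
    rw [htrans, Complex.norm_real, Real.norm_eq_abs] at this
    exact this
  choose Cbf hCbf0 hCbf using key
  refine ⟨n, ∑ i, Cbf i, Finset.sum_nonneg (fun i _ => hCbf0 i), fun i k => ?_⟩
  calc |(A ^ k).mulVec 1 i| ≤ Cbf i * ((k:ℝ)+1)^n := hCbf i k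
    _ ≤ (∑ j, Cbf j) * ((k:ℝ)+1)^n := by
        apply mul_le_mul_of_nonneg_right _ (by positivity)
        exact Finset.single_le_sum (fun j _ => hCbf0 j) (Finset.mem_univ i)

theorem weakPF {N : ℕ} (B : Matrix (Fin N) (Fin N) ℝ)
    (hBnn : ∀ i j, 0 ≤ B i j) (hBirr : MatIrred B)
    (d : Fin N → ℝ) (hd : ∀ i, 0 < d i)
    (hρ : specRad (Matrix.diagonal (fun i => (d i)⁻¹) * B) ≤ 1) :
    ∃ q : Fin N → ℝ, (∀ i, 0 < q i) ∧ ∀ i, B.mulVec q i ≤ d i * q i := by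
  set A : Matrix (Fin N) (Fin N) ℝ := Matrix.diagonal (fun i => (d i)⁻¹) * B with hA
  have hAentry : ∀ i j, A i j = (d i)⁻¹ * B i j := by
    intro i j; rw [hA, Matrix.diagonal_mul]
  have hAnn : ∀ i j, 0 ≤ A i j := by
    intro i j; rw [hAentry]
    exact mul_nonneg (inv_nonneg.mpr (hd i).le) (hBnn i j)
  have hApow_nn : ∀ k i j, 0 ≤ (A ^ k) i j := by
    intro k
    induction k with
    | zero => intro i j; rw [pow_zero]; by_cases h : i = j <;> simp [Matrix.one_apply, h]
    | succ k ih =>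
      intro i j
      rw [pow_succ, Matrix.mul_apply]
      exact Finset.sum_nonneg fun l _ => mul_nonneg (ih i l) (hAnn l j)
  have hApos : ∀ k i j, 0 < (B ^ k) i j → 0 < (A ^ k) i j := by
    intro k
    induction k with
    | zero =>
      intro i j h
      rw [pow_zero] at h ⊢
      by_cases hij : i = j
      · simp [Matrix.one_apply, hij]
      · simp [Matrix.one_apply, hij] at h
    | succ k ih =>
      intro i j h
      rw [pow_succ, Matrix.mul_apply] at h
      have hex : ∃ l, 0 < (B ^ k) i l * B l j := by
        by_contra hcon
        push_neg at hcon
        have : ∑ l, (B ^ k) i l * B l j ≤ 0 := Finset.sum_nonpos fun l _ => hcon l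
        linarith
      obtain ⟨l, hl⟩ := hex
      have hBpk : ∀ i j, 0 ≤ (B ^ k) i j := by
        intro i j
        have : ∀ m, ∀ i j, 0 ≤ (B ^ m) i j := by
          intro m
          induction m with
          | zero => intro i j; rw [pow_zero]; by_cases h : i = j <;> simp [Matrix.one_apply, h]
          | succ m ihm =>
            intro i j
            rw [pow_succ, Matrix.mul_apply]
            exact Finset.sum_nonneg fun l _ => mul_nonneg (ihm i l) (hBnn l j)
        exact this k i j
      have h1 : 0 < (B ^ k) i l := by
        rcases (hBpk i l).lt_or_eq with h'|h'
        · exact h'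
        · exfalso; rw [← h'] at hl; simp at hl
      have h2 : 0 < B l j := by
        rcases (hBnn l j).lt_or_eq with h'|h'
        · exact h'
        · exfalso; rw [← h'] at hl; simp at hl
      have hAlj : 0 < A l j := by
        rw [hAentry]; exact mul_pos (inv_pos.mpr (hd l)) h2
      rw [pow_succ, Matrix.mul_apply]
      have hterm : 0 < (A ^ k) i l * A l j := mul_pos (ih i l h1) hAlj
      have : (A ^ k) i l * A l j ≤ ∑ m, (A ^ k) i m * A m j :=
        Finset.single_le_sum (fun m _ => mul_nonneg (hApow_nn k i m) (hAnn m j))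
          (Finset.mem_univ l)
      linarith
  obtain ⟨m, Cb, hCb0, hCb⟩ := pow_growth A hρ
  set pv : ℕ → Fin N → ℝ := fun k => (A ^ k).mulVec 1 with hpv
  have hpv_nn : ∀ k i, 0 ≤ pv k i := by
    intro k i
    rw [hpv]
    simp only [Matrix.mulVec, dotProduct]
    exact Finset.sum_nonneg fun j _ => mul_nonneg (hApow_nn k i j) (by norm_num)
  have hpv0 : ∀ i, pv 0 i = 1 := by
    intro i; rw [hpv]; simp [Matrix.one_mulVec]
  have hpvrec : ∀ k, A.mulVec (pv k) = pv (k+1) := by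
    intro k
    rw [hpv]
    simp only
    rw [Matrix.mulVec_mulVec, ← pow_succ']
  -- the resolvent vectors
  have hq : ∀ n : ℕ, ∃ q : Fin N → ℝ,
      (∀ i, 0 ≤ q i) ∧ (∀ i, (((n:ℝ)+1)/((n:ℝ)+2)) ≤ q i) ∧
      (∀ i, (((n:ℝ)+1)/((n:ℝ)+2)) * A.mulVec q i = q i - (((n:ℝ)+1)/((n:ℝ)+2))) := by
    intro n
    set r : ℝ := ((n:ℝ)+1)/((n:ℝ)+2) with hr
    have hr0 : 0 < r := by positivity
    have hr1 : r < 1 := by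
      rw [hr, div_lt_one (by positivity)]; linarith
    have hsumg : Summable (fun k : ℕ => Cb * (((k:ℝ)+1)^m * r^(k+1))) := by
      apply Summable.mul_left
      have hbase : Summable (fun k : ℕ => ((k:ℝ))^m * r^k) :=
        summable_pow_mul_geometric_of_norm_lt_one m
          (by rw [Real.norm_eq_abs, abs_of_pos hr0]; exact hr1)
      have h2 := (summable_nat_add_iff 1).mpr hbase
      apply h2.congr
      intro k
      push_cast
      ring
    have hsum : ∀ j, Summable (fun k => r^(k+1) * pv k j) := by
      intro j
      apply Summable.of_nonneg_of_le
        (fun k => mul_nonneg (by positivity) (hpv_nn k j)) _ hsumg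
      intro k
      have h1 : pv k j ≤ Cb * ((k:ℝ)+1)^m := le_trans (le_abs_self _) (hCb j k)
      calc r^(k+1) * pv k j ≤ r^(k+1) * (Cb * ((k:ℝ)+1)^m) := by
            apply mul_le_mul_of_nonneg_left h1 (by positivity)
        _ = Cb * (((k:ℝ)+1)^m * r^(k+1)) := by ring
    set qv : Fin N → ℝ := fun j => ∑' k, r^(k+1) * pv k j with hqv
    have hqvi : ∀ i, qv i = ∑' k, r^(k+1) * pv k i := fun i => rfl
    refine ⟨qv, ?_, ?_, ?_⟩
    · intro i
      rw [hqvi]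
      exact tsum_nonneg fun k => mul_nonneg (by positivity) (hpv_nn k i)
    · intro i
      have h0 : r^(0+1) * pv 0 i = r := by rw [hpv0]; ring
      rw [hqvi]
      calc r = r^(0+1) * pv 0 i := h0.symm
        _ ≤ ∑' k, r^(k+1) * pv k i :=
          Summable.le_tsum (hsum i) 0 (fun j _ => mul_nonneg (by positivity) (hpv_nn j i))
    · intro i
      have hAv : A.mulVec qv i = ∑' k, r^(k+1) * pv (k+1) i := by
        simp only [Matrix.mulVec, dotProduct, hqv]
        have h1 : ∀ j : Fin N, A i j * ∑' k, r^(k+1) * pv k j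
            = ∑' k, A i j * (r^(k+1) * pv k j) := by
          intro j; rw [tsum_mul_left]
        rw [Finset.sum_congr rfl (fun j _ => h1 j)]
        rw [← Summable.tsum_finsetSum (fun j _ => (hsum j).mul_left _)]
        apply tsum_congr
        intro k
        have h2 : ∑ j, A i j * (r^(k+1) * pv k j) = r^(k+1) * ∑ j, A i j * pv k j := by
          rw [Finset.mul_sum]; exact Finset.sum_congr rfl fun j _ => by ring
        rw [h2]
        have h3 : ∑ j, A i j * pv k j = A.mulVec (pv k) i := rfl
        rw [h3, hpvrec]
      have hshift : qv i = r + ∑' k, r^(k+2) * pv (k+1) i := by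
        rw [hqvi, Summable.tsum_eq_zero_add (hsum i)]
        have e0 : r^(0+1) * pv 0 i = r := by rw [hpv0]; ring
        rw [e0]
      have hrmul : r * (A.mulVec qv i) = ∑' k, r^(k+2) * pv (k+1) i := by
        rw [hAv, ← tsum_mul_left]
        apply tsum_congr; intro k; ring
      rw [hrmul, hshift]
      ring
  choose qf hqf_nn hqf_lb hqf_eq using hq
  set rr : ℕ → ℝ := fun n => ((n:ℝ)+1)/((n:ℝ)+2) with hrr
  have hrr0 : ∀ n, 0 < rr n := fun n => by positivity
  have hrr1 : ∀ n, rr n ≤ 1 := fun n => by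
    rw [hrr]; rw [div_le_one (by positivity)]; push_cast; linarith
  set mv : ℕ → ℝ := fun n => 1 + ∑ i, qf n i with hmv
  have hmv1 : ∀ n, 1 ≤ mv n := fun n =>
    le_add_of_nonneg_right (Finset.sum_nonneg fun i _ => hqf_nn n i)
  have hmv0 : ∀ n, 0 < mv n := fun n => lt_of_lt_of_le one_pos (hmv1 n)
  set zf : ℕ → Fin N → ℝ := fun n i => qf n i / mv n with hzf
  set βf : ℕ → ℝ := fun n => (mv n)⁻¹ with hβf
  have hβf0 : ∀ n, 0 < βf n := fun n => inv_pos.mpr (hmv0 n)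
  have hβf1 : ∀ n, βf n ≤ 1 := fun n => inv_le_one_of_one_le₀ (hmv1 n)
  have hzf0 : ∀ n i, 0 ≤ zf n i := fun n i => div_nonneg (hqf_nn n i) (hmv0 n).le
  have hzf1 : ∀ n i, zf n i ≤ 1 := by
    intro n i
    rw [hzf]
    rw [div_le_one (hmv0 n)]
    have h1 : qf n i ≤ ∑ j, qf n j :=
      Finset.single_le_sum (fun j _ => hqf_nn n j) (Finset.mem_univ i)
    rw [hmv]; simp only; linarith
  have hzlb : ∀ n i, rr n * βf n ≤ zf n i := by
    intro n i
    have h1 : rr n * (mv n)⁻¹ ≤ qf n i * (mv n)⁻¹ :=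
      mul_le_mul_of_nonneg_right (hqf_lb n i) (inv_pos.mpr (hmv0 n)).le
    calc rr n * βf n = rr n * (mv n)⁻¹ := rfl
      _ ≤ qf n i * (mv n)⁻¹ := h1
      _ = zf n i := (div_eq_mul_inv _ _).symm
  have hzeq : ∀ n i, rr n * (A.mulVec (zf n) i) = zf n i - rr n * βf n := by
    intro n i
    have h1 : zf n = (mv n)⁻¹ • qf n := by
      funext j
      show qf n j / mv n = ((mv n)⁻¹ • qf n) j
      simp [div_eq_mul_inv, mul_comm]
    have h2 : A.mulVec (zf n) i = (mv n)⁻¹ * A.mulVec (qf n) i := by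
      rw [h1, Matrix.mulVec_smul]; simp
    have h5 : zf n i = (mv n)⁻¹ * qf n i := by
      show qf n i / mv n = _
      rw [div_eq_mul_inv]; ring
    have h6 : rr n * (A.mulVec (qf n)) i = qf n i - rr n := hqf_eq n i
    rw [h2, h5]
    calc rr n * ((mv n)⁻¹ * A.mulVec (qf n) i)
        = (mv n)⁻¹ * (rr n * A.mulVec (qf n) i) := by ring
      _ = (mv n)⁻¹ * (qf n i - rr n) := by rw [h6]
      _ = (mv n)⁻¹ * qf n i - rr n * ((mv n)⁻¹) := by ring
      _ = (mv n)⁻¹ * qf n i - rr n * βf n := rfl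
  have hzsum : ∀ n, ∑ i, zf n i = 1 - βf n := by
    intro n
    have hs : ∑ i, zf n i = (∑ i, qf n i) / mv n := by
      rw [← Finset.sum_div]
    have hmvne : mv n ≠ 0 := (hmv0 n).ne'
    have h1 : (∑ i, qf n i) = mv n - 1 := by rw [hmv]; ring
    rw [hs, h1]
    show (mv n - 1) / mv n = 1 - (mv n)⁻¹
    field_simp
  -- compactness
  set seqz : ℕ → (Fin N → ℝ) × ℝ := fun n => (zf n, βf n) with hseqz
  have hbd : ∀ n, seqz n ∈ Metric.closedBall (0 : (Fin N → ℝ) × ℝ) 1 := by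
    intro n
    rw [Metric.mem_closedBall, dist_zero_right]
    rw [Prod.norm_def]
    apply max_le
    · rw [pi_norm_le_iff_of_nonneg zero_le_one]
      intro i
      rw [Real.norm_eq_abs, abs_le]
      exact ⟨by linarith [hzf0 n i], hzf1 n i⟩
    · rw [Real.norm_eq_abs, abs_le]
      exact ⟨by linarith [hβf0 n], hβf1 n⟩
  obtain ⟨lim, _, φ, hφmono, hφtend⟩ :=
    tendsto_subseq_of_bounded Metric.isBounded_closedBall hbd
  set z : Fin N → ℝ := lim.1 with hzdef
  set β : ℝ := lim.2 with hβdef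
  have hzt : Filter.Tendsto (fun n => zf (φ n)) Filter.atTop (nhds z) :=
    (continuous_fst.tendsto lim).comp hφtend
  have hβt : Filter.Tendsto (fun n => βf (φ n)) Filter.atTop (nhds β) :=
    (continuous_snd.tendsto lim).comp hφtend
  have hzi : ∀ i, Filter.Tendsto (fun n => zf (φ n) i) Filter.atTop (nhds (z i)) :=
    fun i => ((continuous_apply i).tendsto z).comp hzt
  have hφtop : Filter.Tendsto φ Filter.atTop Filter.atTop := hφmono.tendsto_atTop
  have hrt0 : Filter.Tendsto rr Filter.atTop (nhds 1) := by
    have h1 : ∀ n : ℕ, rr n = 1 - 1/((n:ℝ)+2) := by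
      intro n; rw [hrr]; field_simp; ring
    rw [funext h1]
    have h2 : Filter.Tendsto (fun n : ℕ => 1/((n:ℝ)+2)) Filter.atTop (nhds 0) := by
      apply squeeze_zero (fun n => by positivity) (g := fun n : ℕ => 1/((n:ℝ)+1))
      · intro n
        apply div_le_div_of_nonneg_left one_pos.le (by positivity)
        linarith
      · exact tendsto_one_div_add_atTop_nhds_zero_nat
    have h3 := h2.const_sub 1
    simpa using h3
  have hrt : Filter.Tendsto (fun n => rr (φ n)) Filter.atTop (nhds 1) := hrt0.comp hφtop
  have hAzt : ∀ i, Filter.Tendsto (fun n => A.mulVec (zf (φ n)) i) Filter.atTop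
      (nhds (A.mulVec z i)) := by
    intro i
    have h1 : ∀ n, A.mulVec (zf (φ n)) i = ∑ j, A i j * zf (φ n) j := fun n => rfl
    have h2 : A.mulVec z i = ∑ j, A i j * z j := rfl
    rw [funext h1, h2]
    exact tendsto_finset_sum _ (fun j _ => (hzi j).const_mul _)
  have hkey : ∀ i, A.mulVec z i = z i - β := by
    intro i
    have hL : Filter.Tendsto (fun n => rr (φ n) * A.mulVec (zf (φ n)) i) Filter.atTop
        (nhds (1 * A.mulVec z i)) := hrt.mul (hAzt i)
    have hR : Filter.Tendsto (fun n => zf (φ n) i - rr (φ n) * βf (φ n)) Filter.atTop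
        (nhds (z i - 1 * β)) := (hzi i).sub (hrt.mul hβt)
    have heq : (fun n => rr (φ n) * A.mulVec (zf (φ n)) i)
        = (fun n => zf (φ n) i - rr (φ n) * βf (φ n)) := funext fun n => hzeq (φ n) i
    rw [heq] at hL
    have := tendsto_nhds_unique hL hR
    rw [one_mul] at this
    rw [this, one_mul]
  have hz_nn : ∀ i, 0 ≤ z i := by
    intro i
    exact le_of_tendsto_of_tendsto' tendsto_const_nhds (hzi i) (fun n => hzf0 (φ n) i)
  have hβ_nn : 0 ≤ β :=
    le_of_tendsto_of_tendsto' tendsto_const_nhds hβt (fun n => (hβf0 (φ n)).le)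
  have hzβ : ∀ i, β ≤ z i := by
    intro i
    have h1 : Filter.Tendsto (fun n => rr (φ n) * βf (φ n)) Filter.atTop (nhds (1 * β)) :=
      hrt.mul hβt
    rw [one_mul] at h1
    exact le_of_tendsto_of_tendsto' h1 (hzi i) (fun n => hzlb (φ n) i)
  have hsumz : ∑ i, z i = 1 - β := by
    have hL : Filter.Tendsto (fun n => ∑ i, zf (φ n) i) Filter.atTop (nhds (∑ i, z i)) :=
      tendsto_finset_sum _ (fun i _ => hzi i)
    have hR : Filter.Tendsto (fun n => 1 - βf (φ n)) Filter.atTop (nhds (1 - β)) :=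
      tendsto_const_nhds.sub hβt
    have heq : (fun n => ∑ i, zf (φ n) i) = (fun n => 1 - βf (φ n)) :=
      funext fun n => hzsum (φ n)
    rw [heq] at hL
    exact tendsto_nhds_unique hL hR
  have hzpos : ∀ i, 0 < z i := by
    rcases hβ_nn.lt_or_eq with hβpos | hβ0
    · intro i; exact lt_of_lt_of_le hβpos (hzβ i)
    · -- β = 0 : A z = z and ∑ z = 1
      have hAz : ∀ i, A.mulVec z i = z i := by
        intro i; rw [hkey i, ← hβ0, sub_zero]
      have hAzfun : A.mulVec z = z := funext hAz
      have hsum1 : ∑ i, z i = 1 := by rw [hsumz, ← hβ0, sub_zero]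
      have hj : ∃ j, 0 < z j := by
        by_contra hcon
        push_neg at hcon
        have : ∑ i, z i = 0 := le_antisymm (Finset.sum_nonpos fun i _ => hcon i)
          (Finset.sum_nonneg fun i _ => hz_nn i)
        rw [hsum1] at this; norm_num at this
      obtain ⟨j, hj⟩ := hj
      intro i
      obtain ⟨k, _, hBk⟩ := hBirr i j
      have hpowz : ∀ k : ℕ, (A ^ k).mulVec z = z := by
        intro k
        induction k with
        | zero => rw [pow_zero, Matrix.one_mulVec]
        | succ k ih =>
          rw [pow_succ', ← Matrix.mulVec_mulVec, ih, hAzfun]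
      have h1 : z i = ∑ l, (A ^ k) i l * z l := by
        conv_lhs => rw [← hpowz k]
        rfl
      have h2 : (A ^ k) i j * z j ≤ ∑ l, (A ^ k) i l * z l :=
        Finset.single_le_sum (fun l _ => mul_nonneg (hApow_nn k i l) (hz_nn l))
          (Finset.mem_univ j)
      have h3 : 0 < (A ^ k) i j * z j := mul_pos (hApos k i j hBk) hj
      rw [h1]; linarith
  refine ⟨z, hzpos, fun i => ?_⟩
  have h1 : A.mulVec z i ≤ z i := by rw [hkey i]; linarith [hβ_nn]
  have h2 : A.mulVec z i = (d i)⁻¹ * B.mulVec z i := by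
    have e1 : A.mulVec z i = ∑ j, A i j * z j := rfl
    have e2 : B.mulVec z i = ∑ j, B i j * z j := rfl
    rw [e1, e2, Finset.mul_sum]
    apply Finset.sum_congr rfl
    intro j _
    rw [hAentry]; ring
  rw [h2] at h1
  have h3 := mul_le_mul_of_nonneg_left h1 (hd i).le
  calc B.mulVec z i = d i * ((d i)⁻¹ * B.mulVec z i) := by
        rw [← mul_assoc, mul_inv_cancel₀ (hd i).ne.symm, one_mul]
    _ ≤ d i * z i := h3

def SVset {N : ℕ} (w : (Fin N → ℝ) → ℝ) (B : Matrix (Fin N) (Fin N) ℝ)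
    (α δ c : Fin N → ℝ) (Cb : ℝ) : Set ℝ :=
  {v | ∃ (s p y : Fin N → ℝ) (U : Matrix (Fin N) (Fin N) ℝ),
      FeasPR3 w B α δ Cb s p y U ∧ v = w s + ∑ i, c i * p i}

theorem construct_mem {N : ℕ} (hN : 2 ≤ N) (w : (Fin N → ℝ) → ℝ)
    (B : Matrix (Fin N) (Fin N) ℝ) (α δ c : Fin N → ℝ)
    (s x : Fin N → ℝ) (hs : ∀ i, 0 ≤ s i)
    (hx0 : ∀ i, 0 < x i) (hx1 : ∀ i, x i ≤ 1)
    (hineq : ∀ i, B.mulVec x i ≤ x i * (B.mulVec x i + (α i * s i + δ i)))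
    (Cb : ℝ) (hCb : w s ≤ Cb) :
    (w s + ∑ i, c i * x i) ∈ SVset w B α δ c Cb := by
  set y : Fin N → ℝ := fun i => -Real.log (x i) with hy
  have hexp : ∀ i, Real.exp (-(y i)) = x i := by
    intro i; rw [hy]; simp [Real.exp_log (hx0 i)]
  have hexp' : ∀ i, Real.exp (y i) = (x i)⁻¹ := by
    intro i; rw [hy]; simp [Real.exp_neg, Real.exp_log (hx0 i)]
  have hy0 : ∀ i, 0 ≤ y i := by
    intro i; rw [hy]
    simp only [neg_nonneg]
    exact Real.log_nonpos (hx0 i).le (hx1 i)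
  set E : Fin N → Fin N → ℝ := fun i j => Real.exp (y i) * B i j * Real.exp (-(y j)) with hE
  have hEsum : ∀ i, ∑ j, E i j = (x i)⁻¹ * B.mulVec x i := by
    intro i
    have h1 : ∀ j, E i j = (x i)⁻¹ * (B i j * x j) := by
      intro j
      rw [hE]
      simp only
      rw [hexp, hexp']
      ring
    rw [Finset.sum_congr rfl (fun j _ => h1 j), ← Finset.mul_sum]
    rfl
  set slack : Fin N → ℝ := fun i => B.mulVec x i + (α i * s i + δ i) - ∑ j, E i j
    with hslack
  have hslack0 : ∀ i, 0 ≤ slack i := by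
    intro i
    rw [hslack]
    simp only [sub_nonneg, hEsum]
    have h1 := mul_le_mul_of_nonneg_left (hineq i) (inv_nonneg.mpr (hx0 i).le)
    rw [← mul_assoc, inv_mul_cancel₀ (hx0 i).ne', one_mul] at h1
    exact h1
  have hNpos : 0 < N := by omega
  set j0 : Fin N := ⟨0, hNpos⟩ with hj0
  set U : Matrix (Fin N) (Fin N) ℝ := Matrix.of (fun i j => E i j + if j = j0 then slack i else 0)
    with hU
  have hUapp : ∀ i j, U i j = E i j + if j = j0 then slack i else 0 := fun i j => rfl
  refine ⟨s, x, y, U, ⟨hs, hy0, hCb, ?_, ?_, ?_⟩, rfl⟩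
  · intro i
    have h1 : ∑ j, U i j = (∑ j, E i j) + slack i := by
      rw [Finset.sum_congr rfl (fun j _ => hUapp i j), Finset.sum_add_distrib]
      congr 1
      exact (Finset.sum_ite_eq' Finset.univ j0 (fun _ => slack i)).trans
        (if_pos (Finset.mem_univ _))
    rw [h1, hslack]
    ring
  · intro i; rw [hexp]
  · intro i j
    rw [hUapp]
    have h2 : (0:ℝ) ≤ if j = j0 then slack i else 0 := by
      split
      · exact hslack0 i
      · exact le_refl 0
    exact le_add_of_nonneg_right h2

theorem combo_mem {N : ℕ} (w : (Fin N → ℝ) → ℝ)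
    (hwconv : ConvexOn ℝ Set.univ w)
    (B : Matrix (Fin N) (Fin N) ℝ) (hBnn : ∀ i j, 0 ≤ B i j)
    (α δ c : Fin N → ℝ)
    (C1 C2 Cb θ : ℝ) (hθ0 : 0 ≤ θ) (hθ1 : θ ≤ 1)
    (s1 p1 y1 : Fin N → ℝ) (U1 : Matrix (Fin N) (Fin N) ℝ)
    (s2 p2 y2 : Fin N → ℝ) (U2 : Matrix (Fin N) (Fin N) ℝ)
    (h1 : FeasPR3 w B α δ C1 s1 p1 y1 U1)
    (h2 : FeasPR3 w B α δ C2 s2 p2 y2 U2)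
    (hbud : (1-θ)*C1 + θ*C2 ≤ Cb) :
    ∃ v ∈ SVset w B α δ c Cb,
      v ≤ (1-θ)*(w s1 + ∑ i, c i * p1 i) + θ*(w s2 + ∑ i, c i * p2 i) := by
  obtain ⟨hs1, hy1, hw1, hrow1, hp1, hU1⟩ := h1
  obtain ⟨hs2, hy2, hw2, hrow2, hp2, hU2⟩ := h2
  have hθ' : 0 ≤ 1 - θ := by linarith
  set sθ : Fin N → ℝ := (1-θ) • s1 + θ • s2 with hsθ
  set pθ : Fin N → ℝ := fun i => (1-θ) * p1 i + θ * p2 i with hpθ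
  set yθ : Fin N → ℝ := fun i => (1-θ) * y1 i + θ * y2 i with hyθ
  set Uθ : Matrix (Fin N) (Fin N) ℝ :=
    Matrix.of (fun i j => (1-θ) * U1 i j + θ * U2 i j) with hUθ
  have hsθi : ∀ i, sθ i = (1-θ) * s1 i + θ * s2 i := by
    intro i; rw [hsθ]; simp
  have hwθ : w sθ ≤ (1-θ) * w s1 + θ * w s2 := by
    have := hwconv.2 (Set.mem_univ s1) (Set.mem_univ s2) hθ' hθ0 (by ring)
    simpa using this
  have hexpcvx : ∀ a b : ℝ, Real.exp ((1-θ)*a + θ*b) ≤ (1-θ)*Real.exp a + θ*Real.exp b := by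
    intro a b
    have := convexOn_exp.2 (Set.mem_univ a) (Set.mem_univ b) hθ' hθ0 (by ring)
    simpa using this
  have hfeas : FeasPR3 w B α δ Cb sθ pθ yθ Uθ := by
    refine ⟨?_, ?_, ?_, ?_, ?_, ?_⟩
    · intro i
      rw [hsθi]
      have := hs1 i; have := hs2 i
      positivity
    · intro i
      show 0 ≤ (1-θ) * y1 i + θ * y2 i
      have := hy1 i; have := hy2 i
      positivity
    · exact le_trans hwθ (by nlinarith [hw1, hw2])
    · intro i
      have hUθapp : ∀ j, Uθ i j = (1-θ) * U1 i j + θ * U2 i j := fun j => rfl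
      have hBp : B.mulVec pθ i = (1-θ) * B.mulVec p1 i + θ * B.mulVec p2 i := by
        show ∑ j, B i j * pθ j = (1-θ) * ∑ j, B i j * p1 j + θ * ∑ j, B i j * p2 j
        rw [Finset.mul_sum, Finset.mul_sum, ← Finset.sum_add_distrib]
        apply Finset.sum_congr rfl
        intro j _
        rw [hpθ]
        simp only
        ring
      rw [Finset.sum_congr rfl (fun j _ => hUθapp j), Finset.sum_add_distrib,
        ← Finset.mul_sum, ← Finset.mul_sum, hrow1 i, hrow2 i, hBp, hsθi]
      ring
    · intro i
      have h3 : -yθ i = (1-θ) * (-(y1 i)) + θ * (-(y2 i)) := by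
        show -((1-θ) * y1 i + θ * y2 i) = _
        ring
      calc Real.exp (-(yθ i)) ≤ (1-θ)*Real.exp (-(y1 i)) + θ*Real.exp (-(y2 i)) := by
            rw [h3]; exact hexpcvx _ _
        _ ≤ (1-θ) * p1 i + θ * p2 i := by
            have := hp1 i; have := hp2 i
            nlinarith
        _ = pθ i := rfl
    · intro i j
      have hcomb : Real.exp (yθ i) * B i j * Real.exp (-(yθ j))
          = B i j * Real.exp ((1-θ)*(y1 i - y1 j) + θ*(y2 i - y2 j)) := by
        have hyθi : ∀ k, yθ k = (1-θ)*y1 k + θ*y2 k := fun k => rfl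
        have harg : (1-θ)*(y1 i - y1 j) + θ*(y2 i - y2 j) = yθ i + -(yθ j) := by
          rw [hyθi i, hyθi j]; ring
        calc Real.exp (yθ i) * B i j * Real.exp (-(yθ j))
            = B i j * (Real.exp (yθ i) * Real.exp (-(yθ j))) := by
              rw [mul_comm (Real.exp (yθ i)) (B i j), mul_assoc]
          _ = B i j * Real.exp (yθ i + -(yθ j)) := by rw [← Real.exp_add]
          _ = B i j * Real.exp ((1-θ)*(y1 i - y1 j) + θ*(y2 i - y2 j)) := by rw [harg]
      have he1 : B i j * Real.exp (y1 i - y1 j) = Real.exp (y1 i) * B i j * Real.exp (-(y1 j)) := by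
        rw [show y1 i - y1 j = y1 i + (-(y1 j)) by ring, Real.exp_add]
        ring
      have he2 : B i j * Real.exp (y2 i - y2 j) = Real.exp (y2 i) * B i j * Real.exp (-(y2 j)) := by
        rw [show y2 i - y2 j = y2 i + (-(y2 j)) by ring, Real.exp_add]
        ring
      have hUθapp : Uθ i j = (1-θ) * U1 i j + θ * U2 i j := rfl
      rw [hcomb, hUθapp]
      calc B i j * Real.exp ((1-θ)*(y1 i - y1 j) + θ*(y2 i - y2 j))
          ≤ B i j * ((1-θ)*Real.exp (y1 i - y1 j) + θ*Real.exp (y2 i - y2 j)) :=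
            mul_le_mul_of_nonneg_left (hexpcvx _ _) (hBnn i j)
        _ = (1-θ) * (B i j * Real.exp (y1 i - y1 j)) + θ * (B i j * Real.exp (y2 i - y2 j)) := by
            ring
        _ ≤ (1-θ) * U1 i j + θ * U2 i j := by
            rw [he1, he2]
            have := hU1 i j; have := hU2 i j
            apply add_le_add
            · exact mul_le_mul_of_nonneg_left (hU1 i j) hθ'
            · exact mul_le_mul_of_nonneg_left (hU2 i j) hθ0
  refine ⟨w sθ + ∑ i, c i * pθ i, ⟨sθ, pθ, yθ, Uθ, hfeas, rfl⟩, ?_⟩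
  have hsum : ∑ i, c i * pθ i = (1-θ) * ∑ i, c i * p1 i + θ * ∑ i, c i * p2 i := by
    rw [Finset.mul_sum, Finset.mul_sum, ← Finset.sum_add_distrib]
    apply Finset.sum_congr rfl
    intro i _
    rw [hpθ]
    simp only
    ring
  rw [hsum]
  nlinarith [hwθ]

theorem statement16 {N : ℕ} (hN : 2 ≤ N)
    (B : Matrix (Fin N) (Fin N) ℝ) (hBnn : ∀ i j, 0 ≤ B i j) (hBirr : MatIrred B)
    (δ α : Fin N → ℝ) (hδ : ∀ i, 0 < δ i) (hα : ∀ i, 0 < α i)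
    (w : (Fin N → ℝ) → ℝ) (hwcont : Continuous w)
    (hwconv : ConvexOn ℝ Set.univ w)
    (hwmono : ∀ s s' : Fin N → ℝ, s ≤ s' → s ≠ s' → w s < w s')
    (c : Fin N → ℝ) (hc : ∀ i, 0 < c i)
    (pse : (Fin N → ℝ) → (Fin N → ℝ))
    (hpse_range : ∀ s : Fin N → ℝ, 0 ≤ s → ∀ i, 0 ≤ pse s i ∧ pse s i ≤ 1)
    (hpse_zero : ∀ s : Fin N → ℝ, 0 ≤ s → rhoS B α δ s ≤ 1 → pse s = 0)
    (hpse_pos : ∀ s : Fin N → ℝ, 0 ≤ s → 1 < rhoS B α δ s →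
      (∀ i, 0 < pse s i) ∧
      (∀ i, (1 - pse s i) * B.mulVec (pse s) i = (α i * s i + δ i) * pse s i))
    (hρδ : 1 < specRad (Matrix.diagonal (fun i => (δ i)⁻¹) * B))
    (hw0 : w 0 = 0)
    (f0star : ℝ)
    (hf0star : f0star = sInf {v | ∃ s : Fin N → ℝ, 0 ≤ s ∧ v = w s + ∑ i, c i * pse s i})
    (Cstar : ℝ)
    (hCstar : Cstar = sInf {v | ∃ s : Fin N → ℝ, 0 ≤ s ∧ rhoS B α δ s ≤ 1 ∧ v = w s})
    (hCstar_pos : 0 < Cstar)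
    (hCstar_fin : {v | ∃ s : Fin N → ℝ, 0 ≤ s ∧ rhoS B α δ s ≤ 1 ∧ v = w s}.Nonempty)
    (fL : ℝ → ℝ)
    (hfL : ∀ C : ℝ, fL C = sInf {v | ∃ (s p y : Fin N → ℝ) (U : Matrix (Fin N) (Fin N) ℝ),
      FeasPR3 w B α δ C s p y U ∧ v = w s + ∑ i, c i * p i})
    (fLstar : ℝ) (hfLstar : fLstar = sInf (fL '' Set.Ico 0 Cstar))
    (ε : ℝ) (hε0 : 0 < ε) (hεC : ε < Cstar)
    (C : ℝ) (hC : C = Cstar - ε)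
    (sL pL yL : Fin N → ℝ) (UL : Matrix (Fin N) (Fin N) ℝ)
    (hfeas : FeasPR3 w B α δ C sL pL yL UL)
    (hval : w sL + ∑ i, c i * pL i = fL C) :
    (w sL < C → fLstar = fL C ∧ fL C ≤ f0star) ∧
    (w sL = C → Cstar - f0star ≤ ε + ε * (fL 0 - fLstar) / Cstar) := by
    -- basic abbreviations and facts
  have hSV : ∀ Cb : ℝ, fL Cb = sInf (SVset w B α δ c Cb) := hfL
  have hwnn : ∀ s : Fin N → ℝ, (∀ i, 0 ≤ s i) → 0 ≤ w s := by
    intro s hs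
    rcases eq_or_ne s 0 with h | h
    · rw [h, hw0]
    · have h0 : (0 : Fin N → ℝ) ≤ s := fun i => hs i
      have := hwmono 0 s h0 (Ne.symm h)
      rw [hw0] at this
      exact this.le
  have hVnn : ∀ Cb : ℝ, ∀ v ∈ SVset w B α δ c Cb, 0 ≤ v := by
    intro Cb v hv
    obtain ⟨s, p, y, U, ⟨hs, hy, _, _, hp, _⟩, hveq⟩ := hv
    have h1 : 0 ≤ ∑ i, c i * p i := Finset.sum_nonneg fun i _ =>
      mul_nonneg (hc i).le (le_trans (Real.exp_pos _).le (hp i))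
    rw [hveq]
    exact add_nonneg (hwnn s hs) h1
  have hbdd : ∀ Cb : ℝ, BddBelow (SVset w B α δ c Cb) :=
    fun Cb => ⟨0, fun v hv => hVnn Cb v hv⟩
  have hfLle : ∀ (Cb : ℝ) (v : ℝ), v ∈ SVset w B α δ c Cb → fL Cb ≤ v := by
    intro Cb v hv
    rw [hSV]
    exact csInf_le (hbdd Cb) hv
  have hfLnn : ∀ Cb : ℝ, 0 ≤ fL Cb := by
    intro Cb
    rw [hSV]
    exact Real.sInf_nonneg (hVnn Cb)
  -- universal feasible point for any nonnegative budget
  have huniv : ∀ Cb : ℝ, 0 ≤ Cb → (SVset w B α δ c Cb).Nonempty := by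
    intro Cb hCb
    refine ⟨w 0 + ∑ i, c i * (fun _ : Fin N => (1:ℝ)) i, ?_⟩
    apply construct_mem hN w B α δ c 0 (fun _ => 1) (fun i => le_refl 0)
      (fun i => one_pos) (fun i => le_refl 1) ?_ Cb (by rw [hw0]; exact hCb)
    intro i
    have h1 : 0 ≤ B.mulVec (fun _ => (1:ℝ)) i := by
      show (0:ℝ) ≤ ∑ j, B i j * 1
      exact Finset.sum_nonneg fun j _ => by simpa using (hBnn i j)
    have h2 : α i * (0 : Fin N → ℝ) i + δ i = δ i := by simp
    rw [h2, one_mul]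
    linarith [hδ i]
  -- membership from the endemic state pse
  have hpse_mem : ∀ s : Fin N → ℝ, 0 ≤ s → 1 < rhoS B α δ s → ∀ Cb : ℝ, w s ≤ Cb →
      (w s + ∑ i, c i * pse s i) ∈ SVset w B α δ c Cb := by
    intro s hs hρs Cb hCb
    obtain ⟨hpos, heq⟩ := hpse_pos s hs hρs
    apply construct_mem hN w B α δ c s (pse s) (fun i => hs i) hpos
      (fun i => (hpse_range s hs i).2) ?_ Cb hCb
    intro i
    have h := heq i
    nlinarith [h]
  -- membership with arbitrarily small p-value when rhoS ≤ 1
  have hq_mem : ∀ s : Fin N → ℝ, 0 ≤ s → rhoS B α δ s ≤ 1 → ∀ Cb : ℝ, w s ≤ Cb →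
      ∀ γ : ℝ, 0 < γ → ∃ v ∈ SVset w B α δ c Cb, v ≤ w s + γ := by
    intro s hs hρs Cb hCb γ hγ
    have hd : ∀ i, 0 < α i * s i + δ i := fun i =>
      add_pos_of_nonneg_of_pos (mul_nonneg (hα i).le (hs i)) (hδ i)
    obtain ⟨q, hq0, hqle⟩ := weakPF B hBnn hBirr (fun i => α i * s i + δ i) hd hρs
    have hNe : Nonempty (Fin N) := ⟨⟨0, by omega⟩⟩
    set Q : ℝ := ∑ i, q i with hQ
    have hQ0 : 0 < Q := Finset.sum_pos (fun i _ => hq0 i) Finset.univ_nonempty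
    set CQ : ℝ := ∑ i, c i * q i with hCQ
    have hCQ0 : 0 ≤ CQ := Finset.sum_nonneg fun i _ => mul_nonneg (hc i).le (hq0 i).le
    set σ : ℝ := min (1/(Q+1)) (γ/(CQ+1)) with hσ
    have hσ0 : 0 < σ := lt_min (by positivity) (by positivity)
    set x : Fin N → ℝ := fun i => σ * q i with hx
    have hx0 : ∀ i, 0 < x i := fun i => mul_pos hσ0 (hq0 i)
    have hqiQ : ∀ i, q i ≤ Q := fun i =>
      Finset.single_le_sum (fun j _ => (hq0 j).le) (Finset.mem_univ i)
    have hx1 : ∀ i, x i ≤ 1 := by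
      intro i
      have h1 : x i ≤ (1/(Q+1)) * q i :=
        mul_le_mul_of_nonneg_right (min_le_left _ _) (hq0 i).le
      have h2 : (1/(Q+1)) * q i ≤ (1/(Q+1)) * Q :=
        mul_le_mul_of_nonneg_left (hqiQ i) (by positivity)
      have h3 : (1/(Q+1)) * Q ≤ 1 := by
        rw [div_mul_eq_mul_div, one_mul, div_le_one (by positivity)]
        linarith
      linarith
    have hBx : ∀ i, B.mulVec x i = σ * B.mulVec q i := by
      intro i
      show ∑ j, B i j * x j = σ * ∑ j, B i j * q j
      rw [Finset.mul_sum]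
      apply Finset.sum_congr rfl
      intro j _
      show B i j * (σ * q j) = σ * (B i j * q j)
      ring
    have hBxnn : ∀ i, 0 ≤ B.mulVec x i := by
      intro i
      show (0:ℝ) ≤ ∑ j, B i j * x j
      exact Finset.sum_nonneg fun j _ => mul_nonneg (hBnn i j) (hx0 j).le
    have hineq : ∀ i, B.mulVec x i ≤ x i * (B.mulVec x i + (α i * s i + δ i)) := by
      intro i
      have h1 : B.mulVec x i ≤ (α i * s i + δ i) * x i := by
        rw [hBx]
        calc σ * B.mulVec q i ≤ σ * ((α i * s i + δ i) * q i) :=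
              mul_le_mul_of_nonneg_left (hqle i) hσ0.le
          _ = (α i * s i + δ i) * (σ * q i) := by ring
          _ = (α i * s i + δ i) * x i := rfl
      have h2 : 0 ≤ x i * B.mulVec x i := mul_nonneg (hx0 i).le (hBxnn i)
      nlinarith
    refine ⟨w s + ∑ i, c i * x i,
      construct_mem hN w B α δ c s x (fun i => hs i) hx0 hx1 hineq Cb hCb, ?_⟩
    have h4 : ∑ i, c i * x i = σ * CQ := by
      rw [hCQ, Finset.mul_sum]
      apply Finset.sum_congr rfl
      intro i _
      show c i * (σ * q i) = σ * (c i * q i)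
      ring
    have h5 : σ * CQ ≤ γ := by
      calc σ * CQ ≤ (γ/(CQ+1)) * CQ :=
            mul_le_mul_of_nonneg_right (min_le_right _ _) hCQ0
        _ ≤ γ := by
            rw [div_mul_eq_mul_div, div_le_iff₀ (by positivity)]
            nlinarith
    rw [h4]
    linarith
  -- Cstar is a lower bound on w s for rhoS ≤ 1
  have hCstar_le : ∀ s : Fin N → ℝ, 0 ≤ s → rhoS B α δ s ≤ 1 → Cstar ≤ w s := by
    intro s hs hρs
    rw [hCstar]
    apply csInf_le
    · refine ⟨0, fun v hv => ?_⟩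
      obtain ⟨s', hs', _, hveq⟩ := hv
      rw [hveq]
      exact hwnn s' (fun i => hs' i)
    · exact ⟨s, hs, hρs, rfl⟩
  have hC0 : 0 < C := by rw [hC]; linarith
  have hCmem : C ∈ Set.Ico (0:ℝ) Cstar := ⟨hC0.le, by rw [hC]; linarith⟩
  have himgbdd : BddBelow (fL '' Set.Ico 0 Cstar) := by
    refine ⟨0, fun v hv => ?_⟩
    obtain ⟨C', _, hveq⟩ := hv
    rw [← hveq]
    exact hfLnn C'
  have hfLstar_le : fLstar ≤ fL C := by
    rw [hfLstar]
    exact csInf_le himgbdd ⟨C, hCmem, rfl⟩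
  have hfLstar_le0 : fLstar ≤ fL 0 := by
    rw [hfLstar]
    exact csInf_le himgbdd ⟨0, ⟨le_refl 0, hCstar_pos⟩, rfl⟩
  have hf0star_ne : {v | ∃ s : Fin N → ℝ, 0 ≤ s ∧ v = w s + ∑ i, c i * pse s i}.Nonempty :=
    ⟨w 0 + ∑ i, c i * pse 0 i, 0, le_refl 0, rfl⟩
  constructor
  · -- Part 1 : inactive budget constraint
    intro hwsL
    -- master bound: fL C ≤ value of any feasible point of any budget
    have hmaster : ∀ (s2 p2 y2 : Fin N → ℝ) (U2 : Matrix (Fin N) (Fin N) ℝ)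
        (C2 : ℝ), FeasPR3 w B α δ C2 s2 p2 y2 U2 →
        fL C ≤ w s2 + ∑ i, c i * p2 i := by
      intro s2 p2 y2 U2 C2 h2
      obtain ⟨hs2, hy2, hw2, hrow2, hp2, hU2⟩ := h2
      by_cases hcase : w s2 ≤ C
      · exact hfLle C _ ⟨s2, p2, y2, U2, ⟨hs2, hy2, hcase, hrow2, hp2, hU2⟩, rfl⟩
      · push_neg at hcase
        have hfeasL : FeasPR3 w B α δ (w sL) sL pL yL UL :=
          ⟨hfeas.1, hfeas.2.1, le_refl _, hfeas.2.2.2.1, hfeas.2.2.2.2.1, hfeas.2.2.2.2.2⟩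
        have hfeas2 : FeasPR3 w B α δ (w s2) s2 p2 y2 U2 :=
          ⟨hs2, hy2, le_refl _, hrow2, hp2, hU2⟩
        set θ : ℝ := (C - w sL) / (w s2 - w sL) with hθ
        have hnum : 0 < C - w sL := by linarith
        have hden : 0 < w s2 - w sL := by linarith
        have hθpos : 0 < θ := by positivity
        have hθ1 : θ ≤ 1 := by
          rw [hθ, div_le_one hden]
          linarith
        have hbud : (1-θ) * (w sL) + θ * (w s2) ≤ C := by
          have h1 : θ * (w s2 - w sL) = C - w sL := by
            rw [hθ]
            field_simp
          nlinarith
        obtain ⟨v', hv'mem, hv'le⟩ := combo_mem w hwconv B hBnn α δ c (w sL) (w s2) C θ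
          hθpos.le hθ1 sL pL yL UL s2 p2 y2 U2 hfeasL hfeas2 hbud
        have h2 : fL C ≤ v' := hfLle C v' hv'mem
        rw [hval] at hv'le
        have h3 : θ * fL C ≤ θ * (w s2 + ∑ i, c i * p2 i) := by nlinarith
        exact le_of_mul_le_mul_left h3 hθpos
    have hfLC_lb : ∀ C' : ℝ, 0 ≤ C' → fL C ≤ fL C' := by
      intro C' hC'
      rw [hSV C']
      apply le_csInf (huniv C' hC')
      intro v hv
      obtain ⟨s2, p2, y2, U2, h2, hveq⟩ := hv
      rw [hveq]
      exact hmaster s2 p2 y2 U2 C' h2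
    have heq1 : fLstar = fL C := by
      apply le_antisymm hfLstar_le
      rw [hfLstar]
      refine le_csInf ⟨fL C, ⟨C, hCmem, rfl⟩⟩ ?_
      intro v hv
      obtain ⟨C', hC'mem, hveq⟩ := hv
      rw [← hveq]
      exact hfLC_lb C' hC'mem.1
    refine ⟨heq1, ?_⟩
    rw [hf0star]
    apply le_csInf hf0star_ne
    intro v hv
    obtain ⟨s, hs, hveq⟩ := hv
    rcases le_or_gt (rhoS B α δ s) 1 with hρs | hρs
    · -- rhoS ≤ 1 : pse s = 0, use small feasible points
      have hps0 : pse s = 0 := hpse_zero s hs hρs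
      have hv' : v = w s := by
        rw [hveq, hps0]
        simp
      rw [hv']
      apply le_of_forall_pos_le_add
      intro γ hγ
      obtain ⟨v', hv'mem, hv'le⟩ := hq_mem s hs hρs (w s) (le_refl _) γ hγ
      obtain ⟨s2, p2, y2, U2, h2, hveq2⟩ := hv'mem
      calc fL C ≤ w s2 + ∑ i, c i * p2 i := hmaster s2 p2 y2 U2 (w s) h2
        _ = v' := hveq2.symm
        _ ≤ w s + γ := hv'le
    · -- rhoS > 1 : use the endemic point itself
      have hmem := hpse_mem s hs hρs (w s) (le_refl _)
      obtain ⟨s2, p2, y2, U2, h2, hveq2⟩ := hmem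
      rw [hveq]
      calc fL C ≤ w s2 + ∑ i, c i * p2 i := hmaster s2 p2 y2 U2 (w s) h2
        _ = w s + ∑ i, c i * pse s i := hveq2.symm
  · -- Part 2 : active budget constraint
    intro hwsL
    have hfLC_ge : C ≤ fL C := by
      rw [← hval, ← hwsL]
      have h1 : 0 ≤ ∑ i, c i * pL i := Finset.sum_nonneg fun i _ =>
        mul_nonneg (hc i).le (le_trans (Real.exp_pos _).le (hfeas.2.2.2.2.1 i))
      linarith
    have hR0 : 0 ≤ ε * (fL 0 - fLstar) / Cstar :=
      div_nonneg (mul_nonneg hε0.le (by linarith)) hCstar_pos.le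
    have hkey : Cstar - ε ≤ f0star := by
      rw [hf0star]
      apply le_csInf hf0star_ne
      intro v hv
      obtain ⟨s, hs, hveq⟩ := hv
      have hpse_nn : 0 ≤ ∑ i, c i * pse s i := Finset.sum_nonneg fun i _ =>
        mul_nonneg (hc i).le (hpse_range s hs i).1
      rcases le_or_gt (rhoS B α δ s) 1 with hρs | hρs
      · have hps0 : pse s = 0 := hpse_zero s hs hρs
        have hv' : v = w s := by
          rw [hveq, hps0]
          simp
        have := hCstar_le s hs hρs
        rw [hv']
        linarith
      · by_cases hcase : w s ≤ C
        · have hmem := hpse_mem s hs hρs C hcase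
          have h2 : fL C ≤ w s + ∑ i, c i * pse s i := hfLle C _ hmem
          rw [hveq, hC] at *
          linarith
        · push_neg at hcase
          rw [hveq, hC] at *
          linarith
    linarith
end
end

section
/- Assume w is differentiable, let C ∈ (0, C*), and suppose that for every s in S_C := {s ≥ 0 : w(s) ≤ C} one has Bᵀ·diag(α)^{-1}·∇w(s) ≤ c entrywise with strict inequality in at least one coordinate. Then every feasible point (s_L, p_L, y_L, U_L) of problem (P_R3)(C) attaining f_L(C) satisfies w(s_L) = C. Moreover, if this condition holds for every s ∈ S_{C*} := {s ≥ 0 : w(s) ≤ C*}, then f_0* = C*. -/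
noncomputable section

open Matrix

open Filter Set Topology

/-- A continuous linear functional on `Fin N → ℝ` is determined by its values on the
standard basis. -/
lemma stmt17_fapply_sum {N : ℕ} (f : (Fin N → ℝ) →L[ℝ] ℝ) (v : Fin N → ℝ) :
    f v = ∑ j, v j * f (Pi.single j 1) := by
  conv_lhs => rw [← Finset.univ_sum_single v]
  rw [map_sum]
  refine Finset.sum_congr rfl fun j _ => ?_
  have h : Pi.single j (v j) = v j • (Pi.single j (1:ℝ) : Fin N → ℝ) := by
    rw [← Pi.single_smul, smul_eq_mul, mul_one]
  rw [h, f.map_smul, smul_eq_mul]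

lemma stmt17_hasDerivAt_line {N : ℕ} (w : (Fin N → ℝ) → ℝ) (hwdiff : Differentiable ℝ w)
    (x Δ : Fin N → ℝ) :
    HasDerivAt (fun t : ℝ => w (x + t • Δ)) (fderiv ℝ w x Δ) 0 := by
  have h1 : HasDerivAt (fun t : ℝ => x + t • Δ) Δ 0 := by
    simpa using ((hasDerivAt_id (0:ℝ)).smul_const Δ).const_add x
  have h2 : HasFDerivAt w (fderiv ℝ w x) (x + (0:ℝ) • Δ) := by
    simpa using (hwdiff _).hasFDerivAt
  exact h2.comp_hasDerivAt 0 h1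

/-- Gradient inequality for a differentiable convex function. -/
lemma stmt17_grad_le {N : ℕ} (w : (Fin N → ℝ) → ℝ) (hwconv : ConvexOn ℝ Set.univ w)
    (hwdiff : Differentiable ℝ w) (x y : Fin N → ℝ) :
    w x + fderiv ℝ w x (y - x) ≤ w y := by
  set Δ := y - x with hΔ
  set g : ℝ → ℝ := fun t => w (x + t • Δ) with hg
  have hconv : ∀ t : ℝ, 0 ≤ t → t ≤ 1 → g t ≤ (1 - t) * g 0 + t * g 1 := by
    intro t ht0 ht1
    have := hwconv.2 (Set.mem_univ (x + (0:ℝ) • Δ)) (Set.mem_univ (x + (1:ℝ) • Δ))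
      (by linarith : (0:ℝ) ≤ 1 - t) ht0 (by ring : (1 - t) + t = 1)
    simp only [smul_add] at this
    have harg : (1 - t) • x + (1 - t) • (0:ℝ) • Δ + (t • x + t • (1:ℝ) • Δ) = x + t • Δ := by
      module
    rw [harg] at this
    simpa [g] using this
  have hder := stmt17_hasDerivAt_line w hwdiff x Δ
  have hslope : Tendsto (slope g 0) (𝓝[>] 0) (𝓝 (fderiv ℝ w x Δ)) :=
    (hasDerivAt_iff_tendsto_slope.1 hder).mono_left
      (nhdsWithin_mono _ (fun t ht => ne_of_gt ht))
  have hbound : ∀ᶠ t in 𝓝[>] (0:ℝ), slope g 0 t ≤ g 1 - g 0 := by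
    filter_upwards [Ioo_mem_nhdsGT (zero_lt_one)] with t ht
    rw [slope_def_field]
    have h := hconv t ht.1.le ht.2.le
    rw [sub_zero, div_le_iff₀ ht.1]
    nlinarith [h]
  have hle : fderiv ℝ w x Δ ≤ g 1 - g 0 := le_of_tendsto hslope hbound
  have hg0 : g 0 = w x := by simp [g]
  have hg1 : g 1 = w y := by simp [g, hΔ]
  linarith

/-- Weighted sub-invariant vector bounds the spectral radius. -/
lemma stmt17_specRad_le_one {N : ℕ} (hN : 0 < N) (A : Matrix (Fin N) (Fin N) ℝ)
    (hA : ∀ i j, 0 ≤ A i j) (p : Fin N → ℝ) (hp : ∀ i, 0 < p i)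
    (hAp : ∀ i, A.mulVec p i ≤ p i) : specRad A ≤ 1 := by
  have hne : Nonempty (Fin N) := ⟨⟨0, hN⟩⟩
  apply Real.sSup_le _ zero_le_one
  rintro x ⟨μ, hμ, rfl⟩
  set M := A.map (Complex.ofReal) with hM
  have hdet : (algebraMap ℂ (Matrix (Fin N) (Fin N) ℂ) μ - M).det = 0 := by
    by_contra h
    exact (spectrum.mem_iff.1 hμ) ((Matrix.isUnit_iff_isUnit_det _).2 (isUnit_iff_ne_zero.2 h))
  obtain ⟨v, hv0, hv⟩ := (Matrix.exists_mulVec_eq_zero_iff).2 hdet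
  have hMv : M.mulVec v = μ • v := by
    have h1 : (algebraMap ℂ (Matrix (Fin N) (Fin N) ℂ) μ - M).mulVec v
        = μ • v - M.mulVec v := by
      rw [Matrix.sub_mulVec, Algebra.algebraMap_eq_smul_one, Matrix.smul_mulVec,
        Matrix.one_mulVec]
    rw [h1] at hv
    exact (sub_eq_zero.1 hv).symm
  obtain ⟨i, -, hmax'⟩ := Finset.exists_max_image Finset.univ
    (fun k => ‖v k‖ / p k) Finset.univ_nonempty
  have hmax : ∀ j, ‖v j‖ / p j ≤ ‖v i‖ / p i :=
    fun j => hmax' j (Finset.mem_univ j)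
  obtain ⟨k0, hk0'⟩ := Function.ne_iff.1 hv0
  have hk0 : v k0 ≠ 0 := by simpa using hk0'
  have hdiv : 0 < ‖v i‖ / p i :=
    lt_of_lt_of_le (div_pos (norm_pos_iff.mpr hk0) (hp k0)) (hmax k0)
  have hvi : 0 < ‖v i‖ := by
    have := mul_pos hdiv (hp i)
    rwa [div_mul_cancel₀ _ (hp i).ne'] at this
  have key : ‖μ‖ * ‖v i‖ ≤ ‖v i‖ := by
    have h1 : ‖μ‖ * ‖v i‖ = ‖(M.mulVec v) i‖ := by
      rw [hMv]; simp [Pi.smul_apply]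
    have h2 : ‖(M.mulVec v) i‖ ≤ ∑ j, A i j * ‖v j‖ := by
      rw [Matrix.mulVec, dotProduct]
      refine le_trans (norm_sum_le _ _) (Finset.sum_le_sum fun j _ => ?_)
      rw [hM, Matrix.map_apply, norm_mul, Complex.norm_real, Real.norm_eq_abs, abs_of_nonneg (hA i j)]
    have h3 : ∀ j, ‖v j‖ ≤ (‖v i‖ / p i) * p j := by
      intro j
      have h := mul_le_mul_of_nonneg_right (hmax j) (hp j).le
      rwa [div_mul_cancel₀ _ (hp j).ne'] at h
    have h4 : ∑ j, A i j * ‖v j‖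
        ≤ (‖v i‖ / p i) * A.mulVec p i := by
      rw [Matrix.mulVec, dotProduct, Finset.mul_sum]
      refine Finset.sum_le_sum fun j _ => ?_
      calc A i j * ‖v j‖ ≤ A i j * ((‖v i‖ / p i) * p j) :=
            mul_le_mul_of_nonneg_left (h3 j) (hA i j)
        _ = ‖v i‖ / p i * (A i j * p j) := by ring
    have h5 : (‖v i‖ / p i) * A.mulVec p i
        ≤ (‖v i‖ / p i) * p i :=
      mul_le_mul_of_nonneg_left (hAp i) hdiv.le
    have h6 : (‖v i‖ / p i) * p i = ‖v i‖ :=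
      div_mul_cancel₀ _ (hp i).ne'
    linarith
  exact (mul_le_iff_le_one_left hvi).1 key

theorem statement17 {N : ℕ} (hN : 2 ≤ N)
    (B : Matrix (Fin N) (Fin N) ℝ) (hBnn : ∀ i j, 0 ≤ B i j) (hBirr : MatIrred B)
    (δ α : Fin N → ℝ) (hδ : ∀ i, 0 < δ i) (hα : ∀ i, 0 < α i)
    (w : (Fin N → ℝ) → ℝ) (hwcont : Continuous w)
    (hwconv : ConvexOn ℝ Set.univ w)
    (hwmono : ∀ s s' : Fin N → ℝ, s ≤ s' → s ≠ s' → w s < w s')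
    (hwdiff : Differentiable ℝ w)
    (c : Fin N → ℝ) (hc : ∀ i, 0 < c i)
    (pse : (Fin N → ℝ) → (Fin N → ℝ))
    (hpse_range : ∀ s : Fin N → ℝ, 0 ≤ s → ∀ i, 0 ≤ pse s i ∧ pse s i ≤ 1)
    (hpse_zero : ∀ s : Fin N → ℝ, 0 ≤ s → rhoS B α δ s ≤ 1 → pse s = 0)
    (hpse_pos : ∀ s : Fin N → ℝ, 0 ≤ s → 1 < rhoS B α δ s →
      (∀ i, 0 < pse s i) ∧
      (∀ i, (1 - pse s i) * B.mulVec (pse s) i = (α i * s i + δ i) * pse s i))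
    (f0star : ℝ)
    (hf0star : f0star = sInf {v | ∃ s : Fin N → ℝ, 0 ≤ s ∧ v = w s + ∑ i, c i * pse s i})
    (Cstar : ℝ)
    (hCstar : Cstar = sInf {v | ∃ s : Fin N → ℝ, 0 ≤ s ∧ rhoS B α δ s ≤ 1 ∧ v = w s})
    (fL : ℝ → ℝ)
    (hfL : ∀ C : ℝ, fL C = sInf {v | ∃ (s p y : Fin N → ℝ) (U : Matrix (Fin N) (Fin N) ℝ),
      FeasPR3 w B α δ C s p y U ∧ v = w s + ∑ i, c i * p i})
    (C : ℝ) (hC0 : 0 < C) (hCC : C < Cstar)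
    (hcond : ∀ s : Fin N → ℝ, 0 ≤ s → w s ≤ C →
      (∀ i, ∑ j, B j i * (α j)⁻¹ * fderiv ℝ w s (Pi.single j 1) ≤ c i) ∧
      (∃ i, ∑ j, B j i * (α j)⁻¹ * fderiv ℝ w s (Pi.single j 1) < c i)) :
    (∀ (sL pL yL : Fin N → ℝ) (UL : Matrix (Fin N) (Fin N) ℝ),
      FeasPR3 w B α δ C sL pL yL UL →
      w sL + ∑ i, c i * pL i = fL C →
      w sL = C) ∧
    ((∀ s : Fin N → ℝ, 0 ≤ s → w s ≤ Cstar →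
        (∀ i, ∑ j, B j i * (α j)⁻¹ * fderiv ℝ w s (Pi.single j 1) ≤ c i) ∧
        (∃ i, ∑ j, B j i * (α j)⁻¹ * fderiv ℝ w s (Pi.single j 1) < c i)) →
      f0star = Cstar) := by
  have hposN : 0 < N := by omega
  -- w is bounded below by w 0 on the nonnegative orthant
  have wlb : ∀ s : Fin N → ℝ, (∀ i, 0 ≤ s i) → w 0 ≤ w s := by
    intro s hs
    rcases eq_or_ne (0 : Fin N → ℝ) s with h | h
    · exact le_of_eq (congrArg w h)
    · exact (hwmono 0 s (by intro i; simpa using hs i) h).le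
  constructor
  · -- Part 1
    intro sL pL yL UL hfeas hval
    obtain ⟨hs0, hy0, hwC, hrow, hpy, hU⟩ := hfeas
    by_contra hne
    have hlt : w sL < C := lt_of_le_of_ne hwC hne
    have hsL0 : (0 : Fin N → ℝ) ≤ sL := by intro i; simpa using hs0 i
    obtain ⟨i0, hi0⟩ := (hcond sL hsL0 hwC).2
    set Δ : Fin N → ℝ := fun j => B j i0 * (α j)⁻¹ with hΔdef
    have hΔnn : ∀ j, 0 ≤ Δ j := fun j => mul_nonneg (hBnn j i0) (inv_nonneg.2 (hα j).le)
    have hD : fderiv ℝ w sL Δ < c i0 := by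
      rw [stmt17_fapply_sum]
      exact hi0
    have hpi0 : 0 < pL i0 := lt_of_lt_of_le (Real.exp_pos _) (hpy i0)
    set g : ℝ → ℝ := fun t => w (sL + t • Δ) with hgdef
    have hder : HasDerivAt g (fderiv ℝ w sL Δ) 0 := stmt17_hasDerivAt_line w hwdiff sL Δ
    have hslope : Tendsto (slope g 0) (𝓝[>] 0) (𝓝 (fderiv ℝ w sL Δ)) :=
      (hasDerivAt_iff_tendsto_slope.1 hder).mono_left
        (nhdsWithin_mono _ (fun t ht => ne_of_gt ht))
    have ev1 : ∀ᶠ t in 𝓝[>] (0:ℝ), slope g 0 t < c i0 :=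
      hslope.eventually_lt_const hD
    have ev2 : ∀ᶠ t in 𝓝[>] (0:ℝ), g t < C := by
      have hcont : Tendsto g (𝓝 0) (𝓝 (w sL)) := by
        have h := hder.continuousAt.tendsto
        have hg0 : g 0 = w sL := by simp [g]
        rwa [hg0] at h
      exact (hcont.eventually_lt_const hlt).filter_mono nhdsWithin_le_nhds
    have ev3 : ∀ᶠ t in 𝓝[>] (0:ℝ), t ∈ Set.Ioo (0:ℝ) (pL i0) :=
      Ioo_mem_nhdsGT hpi0
    obtain ⟨t, hts, htC, htIoo⟩ := (ev1.and (ev2.and ev3)).exists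
    obtain ⟨ht0, htp⟩ := htIoo
    have hg0 : g 0 = w sL := by simp [g]
    have hslope_lt : w (sL + t • Δ) - w sL < t * c i0 := by
      rw [slope_def_field, sub_zero, div_lt_iff₀ ht0, hg0] at hts
      have : g t = w (sL + t • Δ) := rfl
      nlinarith [hts]
    -- construct the improved feasible point
    have hpt : 0 < pL i0 - t := by linarith
    set η := Real.log (pL i0 / (pL i0 - t)) with hηdef
    have hratio : 1 ≤ pL i0 / (pL i0 - t) := (one_le_div hpt).2 (by linarith)
    have hη0 : 0 ≤ η := Real.log_nonneg hratio
    have hexpη : Real.exp (-η) = (pL i0 - t) / pL i0 := by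
      rw [Real.exp_neg, Real.exp_log (by positivity), inv_div]
    set s' := sL + t • Δ with hs'def
    set p' : Fin N → ℝ := fun k => pL k - t * (if k = i0 then 1 else 0) with hp'def
    set y' : Fin N → ℝ := fun k => yL k + η with hy'def
    have hfeas' : FeasPR3 w B α δ C s' p' y' UL := by
      refine ⟨?_, ?_, ?_, ?_, ?_, ?_⟩
      · intro i
        simp only [hs'def, Pi.add_apply, Pi.smul_apply, smul_eq_mul]
        exact add_nonneg (hs0 i) (mul_nonneg ht0.le (hΔnn i))
      · intro i
        exact add_nonneg (hy0 i) hη0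
      · exact htC.le
      · intro j
        rw [hrow j]
        have hmv : B.mulVec p' j = B.mulVec pL j - t * B j i0 := by
          simp only [Matrix.mulVec, dotProduct, hp'def]
          have hterm : ∀ k, B j k * (pL k - t * (if k = i0 then 1 else 0))
              = B j k * pL k - t * (if k = i0 then B j k else 0) := by
            intro k
            by_cases h : k = i0 <;> simp [h] <;> ring
          rw [Finset.sum_congr rfl (fun k _ => hterm k), Finset.sum_sub_distrib,
            ← Finset.mul_sum, Finset.sum_ite_eq' Finset.univ i0 (fun k => B j k)]
          simp
        have hα' : α j * (t * Δ j) = t * B j i0 := by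
          have hne := (hα j).ne'
          simp only [hΔdef]
          field_simp
        simp only [hs'def, Pi.add_apply, Pi.smul_apply, smul_eq_mul, hmv]
        have hexpand : α j * (sL j + t * Δ j) = α j * sL j + α j * (t * Δ j) := by ring
        rw [hexpand, hα']
        ring
      · intro k
        have hp'i : p' i0 = pL i0 - t := by simp [hp'def]
        have hp'n : ∀ m, m ≠ i0 → p' m = pL m := by
          intro m hm; simp [hp'def, hm]
        by_cases hk : k = i0
        · subst hk
          rw [hp'i]
          show Real.exp (-(yL k + η)) ≤ pL k - t
          rw [neg_add, Real.exp_add, hexpη]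
          calc Real.exp (-(yL k)) * ((pL k - t) / pL k)
              ≤ pL k * ((pL k - t) / pL k) :=
                mul_le_mul_of_nonneg_right (hpy k) (by positivity)
            _ = pL k - t := by field_simp
        · rw [hp'n k hk]
          show Real.exp (-(yL k + η)) ≤ pL k
          rw [neg_add, Real.exp_add]
          calc Real.exp (-(yL k)) * Real.exp (-η)
              ≤ Real.exp (-(yL k)) * 1 := by
                refine mul_le_mul_of_nonneg_left ?_ (Real.exp_nonneg _)
                rw [Real.exp_le_one_iff]
                linarith
            _ = Real.exp (-(yL k)) := mul_one _
            _ ≤ pL k := hpy k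
      · intro i j
        simp only [hy'def]
        rw [Real.exp_add, neg_add, Real.exp_add]
        calc Real.exp (yL i) * Real.exp η * B i j * (Real.exp (-(yL j)) * Real.exp (-η))
            = Real.exp (yL i) * B i j * Real.exp (-(yL j)) * (Real.exp η * Real.exp (-η)) := by
              ring
          _ = Real.exp (yL i) * B i j * Real.exp (-(yL j)) := by
              rw [← Real.exp_add, add_neg_cancel, Real.exp_zero, mul_one]
          _ ≤ UL i j := hU i j
    have hsum : ∑ i, c i * p' i = (∑ i, c i * pL i) - t * c i0 := by
      simp only [hp'def]
      have hterm : ∀ k, c k * (pL k - t * (if k = i0 then 1 else 0))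
          = c k * pL k - t * (if k = i0 then c k else 0) := by
        intro k
        by_cases h : k = i0 <;> simp [h] <;> ring
      rw [Finset.sum_congr rfl (fun k _ => hterm k), Finset.sum_sub_distrib,
        ← Finset.mul_sum, Finset.sum_ite_eq' Finset.univ i0 (fun k => c k)]
      simp
    have hbdd : BddBelow {v | ∃ (s p y : Fin N → ℝ) (U : Matrix (Fin N) (Fin N) ℝ),
        FeasPR3 w B α δ C s p y U ∧ v = w s + ∑ i, c i * p i} := by
      refine ⟨w 0, ?_⟩
      rintro v ⟨s, p, y, U, hf, rfl⟩
      have h1 := wlb s hf.1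
      have h2 : 0 ≤ ∑ i, c i * p i :=
        Finset.sum_nonneg fun i _ => mul_nonneg (hc i).le
          (le_trans (Real.exp_pos _).le (hf.2.2.2.2.1 i))
      linarith
    have hle : fL C ≤ w s' + ∑ i, c i * p' i := by
      rw [hfL C]
      exact csInf_le hbdd ⟨s', p', y', UL, hfeas', rfl⟩
    rw [hsum] at hle
    have : w s' = w (sL + t • Δ) := rfl
    linarith
  · -- Part 2
    intro hcond2
    have hTbdd : BddBelow {v | ∃ s : Fin N → ℝ, 0 ≤ s ∧ rhoS B α δ s ≤ 1 ∧ v = w s} := by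
      refine ⟨w 0, ?_⟩
      rintro v ⟨s, hs, -, rfl⟩
      exact wlb s (fun i => by simpa using hs i)
    -- a supercritical budget point exists
    set s0 : Fin N → ℝ := fun i => (∑ j, B i j) / α i with hs0def
    have hs0nn : (0 : Fin N → ℝ) ≤ s0 := by
      intro i
      simp only [hs0def, Pi.zero_apply]
      exact div_nonneg (Finset.sum_nonneg fun j _ => hBnn i j) (hα i).le
    have hρ0 : rhoS B α δ s0 ≤ 1 := by
      rw [rhoS]
      apply stmt17_specRad_le_one hposN _ ?_ (fun _ => 1) (fun _ => one_pos)
      · intro i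
        have hpos : 0 < α i * s0 i + δ i := by
          have : 0 ≤ α i * s0 i := mul_nonneg (hα i).le (hs0nn i)
          linarith [hδ i]
        have hmul : (Matrix.diagonal (fun i => (α i * s0 i + δ i)⁻¹) * B).mulVec
            (fun _ => (1:ℝ)) i = (α i * s0 i + δ i)⁻¹ * ∑ j, B i j := by
          simp only [Matrix.mulVec, dotProduct, Matrix.diagonal_mul, mul_one]
          rw [Finset.mul_sum]
        rw [hmul]
        have hα0 : α i * s0 i = ∑ j, B i j := by
          simp only [hs0def]
          field_simp
          exact mul_div_cancel_left₀ _ (hα i).ne'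
        rw [hα0]
        have hp2 : 0 < (∑ j, B i j) + δ i := by
          have : 0 ≤ ∑ j, B i j := Finset.sum_nonneg fun j _ => hBnn i j
          linarith [hδ i]
        rw [← div_eq_inv_mul]
        exact (div_le_one hp2).2 (by linarith [hδ i])
      · intro i j
        rw [Matrix.diagonal_mul]
        have hpos : 0 < α i * s0 i + δ i := by
          have : 0 ≤ α i * s0 i := mul_nonneg (hα i).le (hs0nn i)
          linarith [hδ i]
        exact mul_nonneg (inv_nonneg.2 hpos.le) (hBnn i j)
    have hTne : {v | ∃ s : Fin N → ℝ, 0 ≤ s ∧ rhoS B α δ s ≤ 1 ∧ v = w s}.Nonempty :=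
      ⟨w s0, s0, hs0nn, hρ0, rfl⟩
    -- key inequality
    have keyc : ∀ s : Fin N → ℝ, 0 ≤ s → Cstar ≤ w s + ∑ i, c i * pse s i := by
      intro s hs
      by_cases hρ : rhoS B α δ s ≤ 1
      · have hz := hpse_zero s hs hρ
        rw [hz]
        simp only [Pi.zero_apply, mul_zero, Finset.sum_const_zero, add_zero]
        rw [hCstar]
        exact csInf_le hTbdd ⟨s, hs, hρ, rfl⟩
      · push_neg at hρ
        obtain ⟨hppos, hfix⟩ := hpse_pos s hs hρ
        set p := pse s with hpdef
        have hcp_nn : 0 ≤ ∑ i, c i * p i :=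
          Finset.sum_nonneg fun i _ => mul_nonneg (hc i).le (hppos i).le
        have hBpnn : ∀ j, 0 ≤ B.mulVec p j := by
          intro j
          rw [Matrix.mulVec, dotProduct]
          exact Finset.sum_nonneg fun k _ => mul_nonneg (hBnn j k) (hppos k).le
        have hasd : ∀ j, 0 < α j * s j + δ j := by
          intro j
          have h1 : 0 ≤ α j * s j := mul_nonneg (hα j).le (hs j)
          linarith [hδ j]
        have hBppos : ∀ j, 0 < B.mulVec p j := by
          intro j
          rcases (hBpnn j).lt_or_eq with h | h
          · exact h
          · exfalso
            have hf := hfix j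
            rw [← h, mul_zero] at hf
            have : 0 < (α j * s j + δ j) * p j := mul_pos (hasd j) (hppos j)
            linarith
        set Δ : Fin N → ℝ := fun j => (α j)⁻¹ * B.mulVec p j with hΔdef
        have hΔnn : ∀ j, 0 ≤ Δ j := fun j =>
          mul_nonneg (inv_nonneg.2 (hα j).le) (hBpnn j)
        set s' := s + Δ with hs'def
        have hs'nn : (0 : Fin N → ℝ) ≤ s' := by
          intro j
          simp only [hs'def, Pi.add_apply, Pi.zero_apply]
          exact add_nonneg (hs j) (hΔnn j)
        have heq : ∀ j, (α j * s' j + δ j) * p j = B.mulVec p j := by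
          intro j
          have hf := hfix j
          have hαΔ : α j * Δ j = B.mulVec p j := by
            have hne := (hα j).ne'
            simp only [hΔdef]
            field_simp
          have : α j * s' j = α j * s j + B.mulVec p j := by
            simp only [hs'def, Pi.add_apply]
            rw [mul_add, hαΔ]
          rw [this]
          nlinarith [hf]
        have has'd : ∀ j, 0 < α j * s' j + δ j := by
          intro j
          have h1 : 0 ≤ α j * s' j := mul_nonneg (hα j).le (hs'nn j)
          linarith [hδ j]
        have hρs' : rhoS B α δ s' ≤ 1 := by
          rw [rhoS]
          apply stmt17_specRad_le_one hposN _ ?_ p hppos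
          · intro j
            have hmul : (Matrix.diagonal (fun i => (α i * s' i + δ i)⁻¹) * B).mulVec p j
                = (α j * s' j + δ j)⁻¹ * B.mulVec p j := by
              simp only [Matrix.mulVec, dotProduct, Matrix.diagonal_mul]
              rw [Finset.mul_sum]
              exact Finset.sum_congr rfl fun k _ => by ring
            rw [hmul]
            rw [← heq j, ← mul_assoc, inv_mul_cancel₀ (has'd j).ne', one_mul]
          · intro i j
            rw [Matrix.diagonal_mul]
            exact mul_nonneg (inv_nonneg.2 (has'd i).le) (hBnn i j)
        have hCs' : Cstar ≤ w s' := by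
          rw [hCstar]
          exact csInf_le hTbdd ⟨s', hs'nn, hρs', rfl⟩
        by_cases hws : Cstar ≤ w s
        · exact le_trans hws (le_add_of_nonneg_right hcp_nn)
        · push_neg at hws
          set g : ℝ → ℝ := fun t => w (s + t • Δ) with hgdef
          have hgc : Continuous g :=
            hwcont.comp (continuous_const.add (continuous_id.smul continuous_const))
          have hg0 : g 0 = w s := by simp [g]
          have hg1 : g 1 = w s' := by simp [g, hs'def]
          have hmem : Cstar ∈ Set.Icc (g 0) (g 1) := by
            rw [hg0, hg1]
            exact ⟨hws.le, hCs'⟩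
          obtain ⟨t, htI, hgt⟩ := intermediate_value_Icc zero_le_one hgc.continuousOn hmem
          set x := s + t • Δ with hxdef
          have hx0 : (0 : Fin N → ℝ) ≤ x := by
            intro j
            simp only [hxdef, Pi.add_apply, Pi.smul_apply, smul_eq_mul, Pi.zero_apply]
            exact add_nonneg (hs j) (mul_nonneg htI.1 (hΔnn j))
          have hwx : w x = Cstar := hgt
          have hcx := (hcond2 x hx0 (le_of_eq hwx)).1
          have hgrad := stmt17_grad_le w hwconv hwdiff x s
          have hsx : s - x = (-t) • Δ := by
            simp only [hxdef]
            module
          rw [hsx, (fderiv ℝ w x).map_smul, smul_eq_mul, hwx] at hgrad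
          set F := fderiv ℝ w x Δ with hFdef
          have hFle : F ≤ ∑ i, c i * p i := by
            rw [hFdef, stmt17_fapply_sum]
            have hswap : ∑ j, Δ j * fderiv ℝ w x (Pi.single j 1)
                = ∑ i, p i * (∑ j, B j i * (α j)⁻¹ * fderiv ℝ w x (Pi.single j 1)) := by
              have hterm : ∀ j, Δ j * fderiv ℝ w x (Pi.single j 1)
                  = ∑ i, p i * (B j i * (α j)⁻¹ * fderiv ℝ w x (Pi.single j 1)) := by
                intro j
                simp only [hΔdef, Matrix.mulVec, dotProduct]
                rw [Finset.mul_sum, Finset.sum_mul]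
                exact Finset.sum_congr rfl fun k _ => by ring
              rw [Finset.sum_congr rfl (fun j _ => hterm j), Finset.sum_comm]
              exact Finset.sum_congr rfl fun i _ => by rw [Finset.mul_sum]
            rw [hswap]
            calc ∑ i, p i * (∑ j, B j i * (α j)⁻¹ * fderiv ℝ w x (Pi.single j 1))
                ≤ ∑ i, p i * c i :=
                  Finset.sum_le_sum fun i _ =>
                    mul_le_mul_of_nonneg_left (hcx i) (hppos i).le
              _ = ∑ i, c i * p i := Finset.sum_congr rfl fun i _ => mul_comm _ _
          nlinarith [htI.1, htI.2, hcp_nn, hgrad, hFle,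
            mul_le_mul_of_nonneg_left hFle htI.1]
    have hSne : {v | ∃ s : Fin N → ℝ, 0 ≤ s ∧ v = w s + ∑ i, c i * pse s i}.Nonempty :=
      ⟨w 0 + ∑ i, c i * pse 0 i, 0, le_refl _, rfl⟩
    have hge : Cstar ≤ f0star := by
      rw [hf0star]
      refine le_csInf hSne ?_
      rintro v ⟨s, hs, rfl⟩
      exact keyc s hs
    have hle' : f0star ≤ Cstar := by
      rw [hf0star, hCstar]
      refine csInf_le_csInf ?_ hTne ?_
      · refine ⟨Cstar, ?_⟩
        rintro v ⟨s, hs, rfl⟩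
        exact keyc s hs
      · rintro v ⟨s, hs, hρ, rfl⟩
        refine ⟨s, hs, ?_⟩
        rw [hpse_zero s hs hρ]
        simp
    linarith
end
end

section
/- Let B ∈ ℝ^{N×N} be entrywise nonnegative and irreducible and let h ∈ ℝ^N be entrywise positive. Then inf { hᵀz : z ∈ ℝ^N, z ≥ 0, and the minimum of the real parts of the complex eigenvalues of diag(z) − B equals 0 } = inf { Σ_{i,j} h_i B_{ij} x_j / x_i : x ∈ ℝ^N, x entrywise positive }; that is, the diagonal-perturbation problem in (21) is the problem of balancing the matrix diag(h)·B. -/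
noncomputable section

open Matrix Finset

section Helpers
variable {N : ℕ}

lemma mem_spec_iff (M : Matrix (Fin N) (Fin N) ℂ) (μ : ℂ) :
    μ ∈ spectrum ℂ M ↔ ∃ u : Fin N → ℂ, u ≠ 0 ∧ M.mulVec u = μ • u := by
  rw [← AlgEquiv.spectrum_eq (Matrix.toLinAlgEquiv' (R := ℂ) (n := Fin N)),
    ← Module.End.hasEigenvalue_iff_mem_spectrum]
  constructor
  · intro h
    obtain ⟨u, hu⟩ := h.exists_hasEigenvector
    exact ⟨u, hu.2, by simpa [Matrix.toLinAlgEquiv'_apply] using hu.apply_eq_smul⟩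
  · rintro ⟨u, hu, he⟩
    apply Module.End.hasEigenvalue_of_hasEigenvector (x := u)
    refine ⟨?_, hu⟩
    rw [Module.End.mem_eigenspace_iff]
    simpa [Matrix.toLinAlgEquiv'_apply] using he

lemma spec_nonempty (hN : 1 ≤ N) (M : Matrix (Fin N) (Fin N) ℂ) :
    (spectrum ℂ M).Nonempty := by
  have : NeZero N := ⟨by omega⟩
  rw [← AlgEquiv.spectrum_eq (Matrix.toLinAlgEquiv' (R := ℂ) (n := Fin N))]
  obtain ⟨c, hc⟩ := Module.End.exists_eigenvalue (Matrix.toLinAlgEquiv' M)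
  exact ⟨c, Module.End.hasEigenvalue_iff_mem_spectrum.mp hc⟩

lemma row_bound (hN : 1 ≤ N) (M : Matrix (Fin N) (Fin N) ℝ) (hM : ∀ i j, 0 ≤ M i j)
    (x : Fin N → ℝ) (hx : ∀ i, 0 < x i) (u : Fin N → ℂ) (hu : u ≠ 0)
    (c : Fin N → ℂ) (d : Fin N → ℝ)
    (h1 : ∀ i, c i * u i = ∑ j, (M i j : ℂ) * u j)
    (h2 : ∀ i, ∑ j, M i j * x j = d i * x i) :
    ∃ i, ‖c i‖ ≤ d i := by
  have : Nonempty (Fin N) := ⟨⟨0, by omega⟩⟩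
  obtain ⟨i, -, hi⟩ := Finset.exists_max_image univ
    (fun j => ‖u j‖ / x j) univ_nonempty
  set m := ‖u i‖ / x i with hm
  obtain ⟨j0, hj0⟩ := Function.ne_iff.mp hu
  have hmpos : 0 < m := lt_of_lt_of_le
    (div_pos (by simpa using hj0) (hx j0)) (hi j0 (mem_univ _))
  have hui : 0 < ‖u i‖ := by
    have := mul_pos hmpos (hx i)
    rwa [hm, div_mul_cancel₀] at this
    exact (hx i).ne'
  have hb : ∀ j, ‖u j‖ ≤ m * x j := fun j => by
    have := hi j (mem_univ _)
    rw [div_le_iff₀ (hx j)] at this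
    linarith [this]
  refine ⟨i, ?_⟩
  have key : ‖c i‖ * ‖u i‖ ≤ d i * ‖u i‖ := by
    calc ‖c i‖ * ‖u i‖ = ‖c i * u i‖ := (norm_mul _ _).symm
    _ = ‖∑ j, (M i j : ℂ) * u j‖ := by rw [h1 i]
    _ ≤ ∑ j, ‖(M i j : ℂ) * u j‖ := norm_sum_le _ _
    _ = ∑ j, M i j * ‖u j‖ := by
        refine Finset.sum_congr rfl fun j _ => ?_
        rw [norm_mul, Complex.norm_real, Real.norm_eq_abs, abs_of_nonneg (hM i j)]
    _ ≤ ∑ j, M i j * (m * x j) := by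
        refine Finset.sum_le_sum fun j _ => mul_le_mul_of_nonneg_left (hb j) (hM i j)
    _ = m * ∑ j, M i j * x j := by rw [Finset.mul_sum]; congr 1; ext j; ring
    _ = d i * (m * x i) := by rw [h2 i]; ring
    _ = d i * ‖u i‖ := by
        rw [hm, div_mul_cancel₀ _ (hx i).ne']
  exact le_of_mul_le_mul_right key hui

lemma perron_pos (hN : 1 ≤ N) (D : Matrix (Fin N) (Fin N) ℝ) (hD : ∀ i j, 0 < D i j) :
    ∃ r : ℝ, 0 < r ∧ ∃ x : Fin N → ℝ, (∀ i, 0 < x i) ∧ D.mulVec x = r • x := by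
  have : Nonempty (Fin N) := ⟨⟨0, by omega⟩⟩
  -- min and max entries
  obtain ⟨pm, -, hpm⟩ := Finset.exists_min_image (univ : Finset (Fin N × Fin N))
    (fun p => D p.1 p.2) (univ_nonempty)
  obtain ⟨pM, -, hpM⟩ := Finset.exists_max_image (univ : Finset (Fin N × Fin N))
    (fun p => D p.1 p.2) (univ_nonempty)
  set m := D pm.1 pm.2 with hm
  set M := D pM.1 pM.2 with hM
  have hm0 : 0 < m := hD _ _
  have hM0 : 0 < M := hD _ _
  have hmle : ∀ i j, m ≤ D i j := fun i j => hpm (i, j) (mem_univ _)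
  have hMle : ∀ i j, D i j ≤ M := fun i j => hpM (i, j) (mem_univ _)
  have hmM : m ≤ M := hmle _ _
  have hNpos : (0:ℝ) < N := by positivity
  set δ : ℝ := m / (N * M) with hδ
  have hδ0 : 0 < δ := by positivity
  set K : Set (Fin N → ℝ) := {y | (∀ i, δ ≤ y i) ∧ ∑ i, y i = 1} with hK
  have hKpos : ∀ y ∈ K, ∀ i, 0 < y i := fun y hy i => lt_of_lt_of_le hδ0 (hy.1 i)
  have hKle1 : ∀ y ∈ K, ∀ i, y i ≤ 1 := by
    intro y hy i
    calc y i ≤ ∑ j, y j := by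
          exact Finset.single_le_sum (fun j _ => le_of_lt (hKpos y hy j)) (mem_univ i)
      _ = 1 := hy.2
  -- K nonempty
  have hKne : K.Nonempty := by
    refine ⟨fun _ => 1 / N, ⟨fun i => ?_, by
      simp [Finset.sum_const, Finset.card_univ]
      field_simp⟩⟩
    rw [hδ, div_le_div_iff₀ (by positivity) hNpos]
    calc m * N ≤ M * N := by nlinarith
      _ ≤ N * M * 1 := by ring_nf; exact le_refl _
      _ = 1 * (N * M) := by ring
  -- K compact
  have hKclosed : IsClosed K := by
    have h1 : IsClosed {y : Fin N → ℝ | ∀ i, δ ≤ y i} := by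
      rw [Set.setOf_forall]
      exact isClosed_iInter fun i => isClosed_le continuous_const (continuous_apply i)
    have h2 : IsClosed {y : Fin N → ℝ | ∑ i, y i = 1} :=
      isClosed_eq (by continuity) continuous_const
    exact h1.inter h2
  have hKbdd : Bornology.IsBounded K := by
    apply (Metric.isBounded_closedBall (x := (0 : Fin N → ℝ)) (r := 1)).subset
    intro y hy
    simp only [Metric.mem_closedBall, dist_zero_right]
    rw [pi_norm_le_iff_of_nonneg zero_le_one]
    intro i
    rw [Real.norm_eq_abs, abs_le]
    constructor
    · linarith [hKpos y hy i]
    · exact hKle1 y hy i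
  have hKcompact : IsCompact K := Metric.isCompact_of_isClosed_isBounded hKclosed hKbdd
  -- the Collatz-Wielandt function
  set f : (Fin N → ℝ) → ℝ := fun y => univ.inf' univ_nonempty fun i => D.mulVec y i / y i
    with hf
  have hfcont : ContinuousOn f K := by
    apply ContinuousOn.finset_inf'_apply
    intro i _
    have hmv : Continuous fun y : Fin N → ℝ => D.mulVec y i := by
      have he : (fun y : Fin N → ℝ => D.mulVec y i) = fun y => ∑ j, D i j * y j := rfl
      rw [he]
      exact continuous_finset_sum _ fun j _ => continuous_const.mul (continuous_apply j)
    exact ContinuousOn.div hmv.continuousOn (continuous_apply i).continuousOn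
      (fun y hy => (hKpos y hy i).ne')
  obtain ⟨y, hyK, hymax⟩ := hKcompact.exists_isMaxOn hKne hfcont
  set r := f y with hr
  have hypos : ∀ i, 0 < y i := hKpos y hyK
  have hDv : ∀ (u : Fin N → ℝ), (∀ i, 0 < u i) → ∀ i, 0 < D.mulVec u i := by
    intro u hu i
    apply Finset.sum_pos (fun j _ => mul_pos (hD i j) (hu j)) univ_nonempty
  have hr0 : 0 < r := by
    rw [hr, hf]
    rw [Finset.lt_inf'_iff]
    exact fun i _ => div_pos (hDv y hypos i) (hypos i)
  have hrle : ∀ i, r * y i ≤ D.mulVec y i := by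
    intro i
    have := Finset.inf'_le (fun i => D.mulVec y i / y i) (mem_univ i)
    rw [show univ.inf' _ (fun i => D.mulVec y i / y i) = r from rfl] at this
    have h2 := (le_div_iff₀ (hypos i)).mp this
    linarith
  refine ⟨r, hr0, y, hypos, ?_⟩
  -- show equality by contradiction
  by_contra hne
  have hex : ∃ i0, r * y i0 < D.mulVec y i0 := by
    by_contra hc
    push_neg at hc
    apply hne
    ext i
    simp only [Pi.smul_apply, smul_eq_mul]
    exact le_antisymm (hc i) (hrle i)
  obtain ⟨i0, hi0⟩ := hex
  set w : Fin N → ℝ := fun i => D.mulVec y i - r * y i with hw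
  have hw0 : ∀ i, 0 ≤ w i := fun i => by simp [hw]; linarith [hrle i]
  have hwi0 : 0 < w i0 := by simp [hw]; linarith
  have hDw : ∀ i, 0 < D.mulVec w i := by
    intro i
    have : D i i0 * w i0 ≤ ∑ j, D i j * w j :=
      Finset.single_le_sum (fun j _ => mul_nonneg (hD i j).le (hw0 j)) (mem_univ i0)
    have h2 : 0 < D i i0 * w i0 := mul_pos (hD i i0) hwi0
    calc (0:ℝ) < D i i0 * w i0 := h2
      _ ≤ ∑ j, D i j * w j := this
      _ = D.mulVec w i := rfl
  set v := D.mulVec y with hv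
  have hvpos : ∀ i, 0 < v i := hDv y hypos
  have hDvv : ∀ i, r * v i < D.mulVec v i := by
    intro i
    have hsplit : D.mulVec v i = r * v i + D.mulVec w i := by
      have hvj : ∀ j, v j = r * y j + w j := fun j => by simp [hw]
      calc D.mulVec v i = ∑ j, D i j * v j := rfl
        _ = ∑ j, (r * (D i j * y j) + D i j * w j) := by
            refine Finset.sum_congr rfl fun j _ => ?_
            rw [hvj j]; ring
        _ = r * ∑ j, D i j * y j + ∑ j, D i j * w j := by
            rw [Finset.sum_add_distrib, Finset.mul_sum]
        _ = r * v i + D.mulVec w i := rfl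
    rw [hsplit]
    linarith [hDw i]
  -- normalize v and contradict maximality
  set σ := ∑ i, v i with hσ
  have hσ0 : 0 < σ := Finset.sum_pos (fun i _ => hvpos i) univ_nonempty
  set u : Fin N → ℝ := fun i => v i / σ with hu
  have hvm : ∀ i, m ≤ v i := by
    intro i
    calc m = m * ∑ j, y j := by rw [hyK.2]; ring
      _ = ∑ j, m * y j := by rw [Finset.mul_sum]
      _ ≤ ∑ j, D i j * y j := Finset.sum_le_sum fun j _ =>
          mul_le_mul_of_nonneg_right (hmle i j) (hypos j).le
      _ = v i := rfl
  have hvM : ∀ i, v i ≤ M := by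
    intro i
    calc v i = ∑ j, D i j * y j := rfl
      _ ≤ ∑ j, M * y j := Finset.sum_le_sum fun j _ =>
          mul_le_mul_of_nonneg_right (hMle i j) (hypos j).le
      _ = M * ∑ j, y j := by rw [Finset.mul_sum]
      _ = M := by rw [hyK.2]; ring
  have hσM : σ ≤ N * M := by
    calc σ = ∑ i, v i := rfl
      _ ≤ ∑ _i : Fin N, M := Finset.sum_le_sum fun i _ => hvM i
      _ = N * M := by rw [Finset.sum_const, Finset.card_univ, Fintype.card_fin, nsmul_eq_mul]
  have huK : u ∈ K := by
    constructor
    · intro i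
      rw [hu, hδ, div_le_div_iff₀ (by positivity) hσ0]
      nlinarith [hvm i, hσM, hσ0, hm0]
    · rw [hu]
      rw [← Finset.sum_div]
      rw [← hσ, div_self hσ0.ne']
  have hfv : r < f v := by
    rw [hf, Finset.lt_inf'_iff]
    intro i _
    rw [lt_div_iff₀ (hvpos i)]
    exact hDvv i
  have hfu : f u = f v := by
    rw [hf]
    refine Finset.inf'_congr univ_nonempty rfl fun i _ => ?_
    have h1 : D.mulVec u i = D.mulVec v i / σ := by
      calc D.mulVec u i = ∑ j, D i j * (v j / σ) := rfl
        _ = (∑ j, D i j * v j) / σ := by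
            rw [Finset.sum_div]
            exact Finset.sum_congr rfl fun j _ => (mul_div_assoc _ _ _).symm
        _ = D.mulVec v i / σ := rfl
    have h2 : u i = v i / σ := rfl
    rw [h1, h2]
    field_simp
  have h3 : r < f u := hfu ▸ hfv
  have h4 : f u ≤ r := hymax huK
  linarith

lemma pow_entry_nonneg (C : Matrix (Fin N) (Fin N) ℝ) (hC : ∀ i j, 0 ≤ C i j) (k : ℕ) :
    ∀ i j, 0 ≤ (C ^ k) i j := by
  induction k with
  | zero => intro i j; simp [Matrix.one_apply]; split <;> norm_num
  | succ k ih =>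
    intro i j
    rw [pow_succ, Matrix.mul_apply]
    exact Finset.sum_nonneg fun l _ => mul_nonneg (ih i l) (hC l j)

lemma pow_entry_mono (B C : Matrix (Fin N) (Fin N) ℝ) (hB : ∀ i j, 0 ≤ B i j)
    (hBC : ∀ i j, B i j ≤ C i j) (k : ℕ) : ∀ i j, (B ^ k) i j ≤ (C ^ k) i j := by
  induction k with
  | zero => intro i j; simp
  | succ k ih =>
    intro i j
    rw [pow_succ, pow_succ, Matrix.mul_apply, Matrix.mul_apply]
    refine Finset.sum_le_sum fun l _ => ?_
    exact mul_le_mul (ih i l) (hBC l j) (hB l j) (le_trans (pow_entry_nonneg B hB k i l) (ih i l))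

lemma one_add_pow_pos (C : Matrix (Fin N) (Fin N) ℝ) (hC : ∀ i j, 0 ≤ C i j) (m : ℕ) :
    ∀ i j k, k ≤ m → 0 < (C ^ k) i j → 0 < ((1 + C) ^ m) i j := by
  have h1C : ∀ i j, 0 ≤ (1 + C) i j := by
    intro i j
    simp only [Matrix.add_apply, Matrix.one_apply]
    split <;> [linarith [hC i j]; linarith [hC i j]]
  induction m with
  | zero =>
    intro i j k hk hkp
    interval_cases k
    simpa using hkp
  | succ m ih =>
    intro i j k hk hkp
    have hrow : ∀ l, 0 ≤ ((1 + C) ^ m) i l := pow_entry_nonneg _ h1C m i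
    have expand : ((1 + C) ^ (m + 1)) i j = ∑ l, ((1 + C) ^ m) i l * (1 + C) l j := by
      rw [pow_succ, Matrix.mul_apply]
    rcases Nat.lt_or_ge k (m + 1) with hlt | hge
    · -- k ≤ m
      have hk' : k ≤ m := by omega
      have hterm : 0 < ((1 + C) ^ m) i j * (1 + C) j j := by
        apply mul_pos (ih i j k hk' hkp)
        simp only [Matrix.add_apply, Matrix.one_apply_eq]
        linarith [hC j j]
      rw [expand]
      calc (0:ℝ) < ((1 + C) ^ m) i j * (1 + C) j j := hterm
        _ ≤ ∑ l, ((1 + C) ^ m) i l * (1 + C) l j := by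
            exact Finset.single_le_sum (fun l _ => mul_nonneg (hrow l) (h1C l j)) (mem_univ j)
    · -- k = m + 1
      have hk1 : k = m + 1 := by omega
      subst hk1
      rw [pow_succ, Matrix.mul_apply] at hkp
      have : ∃ l, 0 < (C ^ m) i l * C l j := by
        by_contra hc
        push_neg at hc
        have : ∑ l, (C ^ m) i l * C l j ≤ 0 := Finset.sum_nonpos fun l _ => hc l
        linarith
      obtain ⟨l, hl⟩ := this
      have hCml : 0 < (C ^ m) i l := by
        rcases lt_or_eq_of_le (pow_entry_nonneg C hC m i l) with hp | hp
        · exact hp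
        · exfalso; rw [← hp] at hl; simp at hl
      have hClj : 0 < C l j := by
        rcases lt_or_eq_of_le (hC l j) with hp | hp
        · exact hp
        · exfalso; rw [← hp] at hl; simp at hl
      have hterm : 0 < ((1 + C) ^ m) i l * (1 + C) l j := by
        apply mul_pos (ih i l m le_rfl hCml)
        have : C l j ≤ (1 + C) l j := by
          simp only [Matrix.add_apply, Matrix.one_apply]
          split <;> linarith
        linarith
      rw [expand]
      calc (0:ℝ) < ((1 + C) ^ m) i l * (1 + C) l j := hterm
        _ ≤ ∑ l', ((1 + C) ^ m) i l' * (1 + C) l' j := by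
            exact Finset.single_le_sum (fun l' _ => mul_nonneg (hrow l') (h1C l' j)) (mem_univ l)

lemma row_exists_pos (C : Matrix (Fin N) (Fin N) ℝ) (hC : ∀ i j, 0 ≤ C i j) (i : Fin N)
    (hirr : ∃ k, 1 ≤ k ∧ 0 < (C ^ k) i i) : ∃ j, 0 < C i j := by
  by_contra hc
  push_neg at hc
  have hrow0 : ∀ j, C i j = 0 := fun j => le_antisymm (hc j) (hC i j)
  obtain ⟨k, hk1, hkp⟩ := hirr
  have : ∀ k, 1 ≤ k → ∀ j, (C ^ k) i j = 0 := by
    intro k hk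
    induction k with
    | zero => omega
    | succ k ih =>
      intro j
      rcases Nat.lt_or_ge k 1 with hk0 | hk1'
      · have : k = 0 := by omega
        subst this
        simpa using hrow0 j
      · rw [pow_succ', Matrix.mul_apply]
        apply Finset.sum_eq_zero
        intro l _
        rw [hrow0 l, zero_mul]
  rw [this k hk1 i] at hkp
  exact lt_irrefl 0 hkp

lemma map_mulVec_eq (M : Matrix (Fin N) (Fin N) ℝ) (u : Fin N → ℂ) (i : Fin N) :
    (M.map Complex.ofReal).mulVec u i = ∑ j, (M i j : ℂ) * u j := rfl

lemma real_eigen_to_complex (M : Matrix (Fin N) (Fin N) ℝ) (x : Fin N → ℝ) (t : ℝ)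
    (hmx : ∀ i, ∑ j, M i j * x j = t * x i) :
    (M.map Complex.ofReal).mulVec (fun i => (x i : ℂ)) = (t:ℂ) • (fun i => (x i : ℂ)) := by
  funext i
  rw [map_mulVec_eq]
  show ∑ j, (M i j : ℂ) * (x j : ℂ) = (t:ℂ) * (x i:ℂ)
  calc ∑ j, (M i j:ℂ)*(x j:ℂ) = ((∑ j, M i j * x j : ℝ) : ℂ) := by push_cast; rfl
    _ = ((t * x i : ℝ):ℂ) := by rw [hmx i]
    _ = (t:ℂ)*(x i:ℂ) := by push_cast; rfl

lemma diagsub_row (z : Fin N → ℝ) (B : Matrix (Fin N) (Fin N) ℝ) (u : Fin N → ℂ) (i : Fin N) :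
    ((Matrix.diagonal z - B).map Complex.ofReal).mulVec u i
      = (z i : ℂ) * u i - ∑ j, (B i j : ℂ) * u j := by
  rw [map_mulVec_eq]
  have : ∀ j, ((Matrix.diagonal z - B) i j : ℂ) * u j
      = (if i = j then (z i : ℂ) * u j else 0) - (B i j : ℂ) * u j := by
    intro j
    simp only [Matrix.sub_apply, Matrix.diagonal_apply]
    push_cast [apply_ite (fun t : ℝ => (t : ℂ))]
    split <;> ring
  rw [Finset.sum_congr rfl fun j _ => this j, Finset.sum_sub_distrib, Finset.sum_ite_eq]
  simp

lemma diagadd_row (f : Fin N → ℝ) (B : Matrix (Fin N) (Fin N) ℝ) (u : Fin N → ℂ) (i : Fin N) :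
    ((Matrix.diagonal f + B).map Complex.ofReal).mulVec u i
      = (f i : ℂ) * u i + ∑ j, (B i j : ℂ) * u j := by
  rw [map_mulVec_eq]
  have : ∀ j, ((Matrix.diagonal f + B) i j : ℂ) * u j
      = (if i = j then (f i : ℂ) * u j else 0) + (B i j : ℂ) * u j := by
    intro j
    simp only [Matrix.add_apply, Matrix.diagonal_apply]
    push_cast [apply_ite (fun t : ℝ => (t : ℂ))]
    split <;> ring
  rw [Finset.sum_congr rfl fun j _ => this j, Finset.sum_add_distrib, Finset.sum_ite_eq]
  simp

lemma diagsub_row_real (z : Fin N → ℝ) (B : Matrix (Fin N) (Fin N) ℝ) (x : Fin N → ℝ) (i : Fin N) :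
    (Matrix.diagonal z - B).mulVec x i = z i * x i - ∑ j, B i j * x j := by
  rw [Matrix.sub_mulVec, Pi.sub_apply, Matrix.mulVec_diagonal]
  rfl

lemma diagadd_row_real (f : Fin N → ℝ) (B : Matrix (Fin N) (Fin N) ℝ) (x : Fin N → ℝ) (i : Fin N) :
    (Matrix.diagonal f + B).mulVec x i = f i * x i + ∑ j, B i j * x j := by
  rw [Matrix.add_mulVec, Pi.add_apply, Matrix.mulVec_diagonal]
  rfl

end Helpers

theorem statement19 {N : ℕ} (hN : 2 ≤ N)
    (B : Matrix (Fin N) (Fin N) ℝ) (hBnn : ∀ i j, 0 ≤ B i j) (hBirr : MatIrred B)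
    (h : Fin N → ℝ) (hh : ∀ i, 0 < h i) :
    sInf {v | ∃ z : Fin N → ℝ, (∀ i, 0 ≤ z i) ∧
        sInf (Complex.re '' spectrum ℂ ((Matrix.diagonal z - B).map Complex.ofReal)) = 0 ∧
        v = ∑ i, h i * z i} =
      sInf {v | ∃ x : Fin N → ℝ, (∀ i, 0 < x i) ∧
        v = ∑ i, ∑ j, h i * B i j * x j / x i} := by
  have hN1 : 1 ≤ N := by omega
  have hne0 : Nonempty (Fin N) := ⟨⟨0, by omega⟩⟩
  congr 1
  ext v
  simp only [Set.mem_setOf_eq]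
  constructor
  · -- hard direction: perturbation value is a balancing value
    rintro ⟨z, hz, hspec, hv⟩
    set s := Finset.univ.sup' univ_nonempty z with hs
    have hzs : ∀ i, z i ≤ s := fun i => Finset.le_sup' z (mem_univ i)
    set C : Matrix (Fin N) (Fin N) ℝ := Matrix.diagonal (fun i => s - z i) + B with hC
    have hCapp : ∀ i j, C i j = (if i = j then s - z i else 0) + B i j := by
      intro i j
      rw [hC, Matrix.add_apply, Matrix.diagonal_apply]
    have hCnn : ∀ i j, 0 ≤ C i j := by
      intro i j
      rw [hCapp]
      split
      · linarith [hzs i, hBnn i j]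
      · simpa using hBnn i j
    have hBC : ∀ i j, B i j ≤ C i j := by
      intro i j
      rw [hCapp]
      split
      · linarith [hzs i]
      · simp
    have hCirr : ∀ i j, ∃ k, 1 ≤ k ∧ 0 < (C ^ k) i j := by
      intro i j
      obtain ⟨k, hk1, hkp⟩ := hBirr i j
      exact ⟨k, hk1, lt_of_lt_of_le hkp (pow_entry_mono B C hBnn hBC k i j)⟩
    choose kf hk1 hkp using hCirr
    set m := Finset.univ.sup (fun p : Fin N × Fin N => kf p.1 p.2) with hm
    have hkm : ∀ i j, kf i j ≤ m :=
      fun i j => Finset.le_sup (f := fun p : Fin N × Fin N => kf p.1 p.2) (mem_univ (i, j))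
    set D := (1 + C) ^ m with hD
    have hDpos : ∀ i j, 0 < D i j :=
      fun i j => one_add_pow_pos C hCnn m i j (kf i j) (hkm i j) (hkp i j)
    obtain ⟨r, hr0, x, hx, hDx⟩ := perron_pos hN1 D hDpos
    set vv := C.mulVec x with hvv
    have hvvpos : ∀ i, 0 < vv i := by
      intro i
      obtain ⟨j, hj⟩ := row_exists_pos C hCnn i ⟨kf i i, hk1 i i, hkp i i⟩
      have h1 : C i j * x j ≤ ∑ l, C i l * x l :=
        Finset.single_le_sum (fun l _ => mul_nonneg (hCnn i l) (hx l).le) (mem_univ j)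
      have h2 : 0 < C i j * x j := mul_pos hj (hx j)
      calc (0:ℝ) < C i j * x j := h2
        _ ≤ ∑ l, C i l * x l := h1
        _ = vv i := rfl
    have hcomm : C * D = D * C := by
      rw [hD]
      exact (((Commute.one_right C).add_right (Commute.refl C)).pow_right m).eq
    have hDvv : D.mulVec vv = r • vv := by
      rw [hvv, Matrix.mulVec_mulVec, ← hcomm, ← Matrix.mulVec_mulVec, hDx,
        Matrix.mulVec_smul]
    obtain ⟨i0, -, hi0⟩ := Finset.exists_min_image Finset.univ (fun i => vv i / x i)
      univ_nonempty
    set θ := vv i0 / x i0 with hθ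
    have hθ0 : 0 < θ := div_pos (hvvpos i0) (hx i0)
    have hwge : ∀ i, θ * x i ≤ vv i := by
      intro i
      have h1 := hi0 i (mem_univ i)
      rw [le_div_iff₀ (hx i)] at h1
      linarith
    set w : Fin N → ℝ := fun i => vv i - θ * x i with hw
    have hw0 : ∀ i, 0 ≤ w i := fun i => by simp only [hw]; linarith [hwge i]
    have hwi0 : w i0 = 0 := by
      simp only [hw, hθ]
      rw [div_mul_cancel₀ _ (hx i0).ne']
      ring
    have hDw : ∀ i, D.mulVec w i = r * w i := by
      intro i
      have hsplit : D.mulVec w i = D.mulVec vv i - θ * D.mulVec x i := by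
        calc D.mulVec w i = ∑ j, D i j * (vv j - θ * x j) := rfl
          _ = ∑ j, (D i j * vv j - θ * (D i j * x j)) := by
              refine Finset.sum_congr rfl fun j _ => ?_; ring
          _ = ∑ j, D i j * vv j - θ * ∑ j, D i j * x j := by
              rw [Finset.sum_sub_distrib, Finset.mul_sum]
          _ = D.mulVec vv i - θ * D.mulVec x i := rfl
      have e1 : D.mulVec vv i = r * vv i := by rw [hDvv]; simp
      have e2 : D.mulVec x i = r * x i := by rw [hDx]; simp
      rw [hsplit, e1, e2]
      simp only [hw]
      ring
    have hweq : ∀ i, w i = 0 := by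
      by_contra hc
      push_neg at hc
      obtain ⟨j1, hj1⟩ := hc
      have hj1p : 0 < w j1 := lt_of_le_of_ne (hw0 j1) (Ne.symm hj1)
      have hpos : 0 < D.mulVec w i0 := by
        calc (0:ℝ) < D i0 j1 * w j1 := mul_pos (hDpos i0 j1) hj1p
          _ ≤ ∑ l, D i0 l * w l := Finset.single_le_sum
              (fun l _ => mul_nonneg (hDpos i0 l).le (hw0 l)) (mem_univ j1)
          _ = D.mulVec w i0 := rfl
      rw [hDw i0, hwi0, mul_zero] at hpos
      exact lt_irrefl 0 hpos
    have hCx : ∀ i, ∑ j, C i j * x j = θ * x i := by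
      intro i
      have h1 := hweq i
      simp only [hw, sub_eq_zero] at h1
      calc ∑ j, C i j * x j = vv i := rfl
        _ = θ * x i := h1
    set Am := (Matrix.diagonal z - B).map Complex.ofReal with hAm
    have hACrow : ∀ (u : Fin N → ℂ) i,
        Am.mulVec u i + (C.map Complex.ofReal).mulVec u i = (s:ℂ) * u i := by
      intro u i
      rw [hAm, hC, diagsub_row, diagadd_row]
      push_cast
      ring
    have hxc : (fun i => (x i : ℂ)) ≠ 0 := by
      intro hcon
      have h1 := congrFun hcon i0
      simp only [Pi.zero_apply, Complex.ofReal_eq_zero] at h1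
      exact (hx i0).ne' h1
    have hCrow : ∀ i, ∑ j, C i j * x j = (s - z i) * x i + ∑ j, B i j * x j := by
      intro i
      have h3 := diagadd_row_real (fun i => s - z i) B x i
      rw [← hC] at h3
      calc ∑ j, C i j * x j = C.mulVec x i := rfl
        _ = (s - z i) * x i + ∑ j, B i j * x j := h3
    have hAx : ∀ i, ∑ j, (Matrix.diagonal z - B) i j * x j = (s - θ) * x i := by
      intro i
      have e1 := diagsub_row_real z B x i
      have e2 := hCrow i
      have e3 := hCx i
      calc ∑ j, (Matrix.diagonal z - B) i j * x j = (Matrix.diagonal z - B).mulVec x i := rfl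
        _ = z i * x i - ∑ j, B i j * x j := e1
        _ = (s - θ) * x i := by linear_combination e2 - e3
    have hsθmem : ((s - θ : ℝ):ℂ) ∈ spectrum ℂ Am := by
      rw [mem_spec_iff]
      exact ⟨fun i => (x i:ℂ), hxc, real_eigen_to_complex _ x (s - θ) hAx⟩
    have hlb : ∀ t ∈ Complex.re '' spectrum ℂ Am, s - θ ≤ t := by
      rintro t ⟨μ, hμ, rfl⟩
      rw [mem_spec_iff] at hμ
      obtain ⟨u, hu, hequ⟩ := hμ
      have h1 : ∀ i, ((s:ℂ) - μ) * u i = ∑ j, (C i j : ℂ) * u j := by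
        intro i
        have e1 := congrFun hequ i
        have e2 : Am.mulVec u i + ∑ j, (C i j : ℂ) * u j = (s:ℂ) * u i := hACrow u i
        rw [Pi.smul_apply, smul_eq_mul] at e1
        rw [e1] at e2
        linear_combination -e2
      obtain ⟨i, habs⟩ := row_bound hN1 C hCnn x hx u hu _ (fun _ => θ) h1 (fun i => hCx i)
      have hre := Complex.re_le_norm ((s:ℂ) - μ)
      have h3 : ((s:ℂ) - μ).re = s - μ.re := by simp
      rw [h3] at hre
      have habs' : ‖(s:ℂ) - μ‖ ≤ θ := habs
      linarith
    have hBdd : BddBelow (Complex.re '' spectrum ℂ Am) := ⟨s - θ, hlb⟩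
    have hnsp : (Complex.re '' spectrum ℂ Am).Nonempty :=
      (spec_nonempty hN1 Am).image _
    have hθs : θ = s := by
      have hle : sInf (Complex.re '' spectrum ℂ Am) ≤ s - θ :=
        csInf_le hBdd ⟨_, hsθmem, by simp⟩
      have hge : s - θ ≤ sInf (Complex.re '' spectrum ℂ Am) := le_csInf hnsp hlb
      rw [hAm] at hle hge
      rw [hspec] at hle hge
      linarith
    have hBx : ∀ i, ∑ j, B i j * x j = z i * x i := by
      intro i
      have h1 := hCx i
      rw [hθs] at h1
      linear_combination h1 - hCrow i
    refine ⟨x, hx, ?_⟩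
    rw [hv]
    refine Finset.sum_congr rfl fun i _ => ?_
    have hzi : z i = (∑ j, B i j * x j) / x i := by
      rw [hBx i, mul_div_cancel_right₀ _ (hx i).ne']
    calc h i * z i = h i * ((∑ j, B i j * x j) / x i) := by rw [hzi]
      _ = (∑ j, h i * (B i j * x j)) / x i := by rw [← Finset.mul_sum]; ring
      _ = ∑ j, h i * B i j * x j / x i := by
          rw [Finset.sum_div]
          refine Finset.sum_congr rfl fun j _ => ?_
          ring
  · -- easy direction: balancing value is a perturbation value
    rintro ⟨x, hx, hv⟩
    set z : Fin N → ℝ := fun i => (∑ j, B i j * x j) / x i with hzdef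
    have hz : ∀ i, 0 ≤ z i := fun i => div_nonneg
      (Finset.sum_nonneg fun j _ => mul_nonneg (hBnn i j) (hx j).le) (hx i).le
    have hzx : ∀ i, ∑ j, B i j * x j = z i * x i := by
      intro i
      rw [hzdef]
      rw [div_mul_cancel₀ _ (hx i).ne']
    refine ⟨z, hz, ?_, ?_⟩
    · have h0mem : (0:ℂ) ∈ spectrum ℂ ((Matrix.diagonal z - B).map Complex.ofReal) := by
        rw [mem_spec_iff]
        refine ⟨fun i => (x i : ℂ), ?_, ?_⟩
        · intro hcon
          have h1 := congrFun hcon ⟨0, by omega⟩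
          simp only [Pi.zero_apply, Complex.ofReal_eq_zero] at h1
          exact (hx _).ne' h1
        · funext i
          rw [diagsub_row]
          have h2 : ∑ j, (B i j : ℂ) * (x j:ℂ) = ((∑ j, B i j * x j : ℝ):ℂ) := by
            push_cast; rfl
          rw [h2, hzx i]
          push_cast
          simp
      have hnonneg : ∀ t ∈ Complex.re '' spectrum ℂ
          ((Matrix.diagonal z - B).map Complex.ofReal), 0 ≤ t := by
        rintro t ⟨μ, hμ, rfl⟩
        rw [mem_spec_iff] at hμ
        obtain ⟨u, hu, hequ⟩ := hμ
        have h1 : ∀ i, ((z i : ℂ) - μ) * u i = ∑ j, (B i j : ℂ) * u j := by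
          intro i
          have e1 := congrFun hequ i
          rw [diagsub_row, Pi.smul_apply, smul_eq_mul] at e1
          linear_combination e1
        obtain ⟨i, habs⟩ := row_bound hN1 B hBnn x hx u hu _ z h1 (fun i => hzx i)
        have hre := Complex.re_le_norm ((z i : ℂ) - μ)
        have h3 : ((z i:ℂ) - μ).re = z i - μ.re := by simp
        rw [h3] at hre
        linarith
      apply le_antisymm
      · exact csInf_le ⟨0, hnonneg⟩ ⟨0, h0mem, by simp⟩
      · exact le_csInf ⟨0, ⟨0, h0mem, by simp⟩⟩ hnonneg
    · rw [hv]
      refine Finset.sum_congr rfl fun i _ => ?_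
      have hzi : z i = (∑ j, B i j * x j) / x i := rfl
      calc ∑ j, h i * B i j * x j / x i = ∑ j, h i * (B i j * x j) / x i := by
            refine Finset.sum_congr rfl fun j _ => ?_; ring
        _ = (∑ j, h i * (B i j * x j)) / x i := by rw [Finset.sum_div]
        _ = h i * ((∑ j, B i j * x j) / x i) := by rw [← Finset.mul_sum]; ring
        _ = h i * z i := by rw [← hzi]
end
end
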